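/- arXiv:2105.07487 — 4 statements merged into one kernel-verified Lean document; each statement's English description precedes it below -/
import Mathlib

section
/- Let γ > 0. For every τ ∈ ℝ the function p ↦ e^{ipτ} · p²/(p⁴ + γ⁴) is integrable on ℝ, and (1/(2π)) ∫_ℝ e^{ipτ} · p²/(p⁴ + γ⁴) dp = (1/(2γ)) · e^{−γ|τ|/√2} · sin(π/4 − γ|τ|/√2). -/
open MeasureTheory Complex Set Filter
open scoped FourierTransform Real


lemma integrableOn_cexp_neg_Ioi {c : ℂ} (hc : 0 < c.re) :
    IntegrableOn (fun t : ℝ => Complex.exp (-(c * t))) (Ioi 0) := by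
  apply (exp_neg_integrableOn_Ioi 0 hc).mono' ?_ ?_
  · exact (Complex.continuous_exp.comp
      (continuous_const.mul Complex.continuous_ofReal).neg).aestronglyMeasurable.restrict
  · filter_upwards with t
    simp [Complex.norm_exp]

lemma tendsto_cexp_aux {c : ℂ} (hc : 0 < c.re) :
    Tendsto (fun t : ℝ => -Complex.exp (-(c * t)) / c) atTop (nhds 0) := by
  rw [tendsto_zero_iff_norm_tendsto_zero]
  have h : (fun t : ℝ => ‖-Complex.exp (-(c * t)) / c‖)
      = fun t : ℝ => Real.exp (-(c.re * t)) / ‖c‖ := by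
    funext t
    simp [Complex.norm_exp, norm_div]
  rw [h]
  have h2 : Tendsto (fun t : ℝ => -(c.re * t)) atTop atBot := by
    apply tendsto_neg_atBot_iff.mpr
    exact Tendsto.const_mul_atTop hc tendsto_id
  simpa using (Real.tendsto_exp_atBot.comp h2).div_const ‖c‖

lemma integral_cexp_neg_Ioi {c : ℂ} (hc : 0 < c.re) :
    ∫ t in Ioi (0:ℝ), Complex.exp (-(c * t)) = 1 / c := by
  have hc0 : c ≠ 0 := fun h => by simp [h] at hc
  have hderiv : ∀ x ∈ Ioi (0:ℝ), HasDerivAt (fun t : ℝ => -Complex.exp (-(c * t)) / c)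
      (Complex.exp (-(c * x))) x := by
    intro x _
    have h1 : HasDerivAt (fun t : ℝ => ((t : ℂ))) 1 x := Complex.ofRealCLM.hasDerivAt
    have h2 : HasDerivAt (fun t : ℝ => -(c * (t:ℂ))) (-c) x := by
      simpa using (h1.const_mul c).fun_neg
    have h3 := (h2.cexp).neg.div_const c
    simpa [mul_comm, div_self hc0] using h3.congr_deriv (by field_simp)
  have hcont : ContinuousWithinAt (fun t : ℝ => -Complex.exp (-(c * t)) / c) (Ici 0) 0 := by
    apply Continuous.continuousWithinAt
    exact ((Complex.continuous_exp.comp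
      (continuous_const.mul Complex.continuous_ofReal).neg).neg).div_const c
  have := integral_Ioi_of_hasDerivAt_of_tendsto hcont hderiv
    (integrableOn_cexp_neg_Ioi hc) (tendsto_cexp_aux hc)
  rw [this]
  simp [hc0]
  ring

lemma integrable_exp_neg_abs {c : ℝ} (hc : 0 < c) :
    Integrable (fun t : ℝ => Real.exp (-(c * |t|))) := by
  have h1 : IntegrableOn (fun t : ℝ => Real.exp (-(c * |t|))) (Ioi 0) := by
    apply (exp_neg_integrableOn_Ioi 0 hc).congr_fun ?_ measurableSet_Ioi
    intro t ht
    simp only [abs_of_pos (show (0:ℝ) < t from ht), neg_mul]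
  have h2 : IntegrableOn (fun t : ℝ => Real.exp (-(c * |t|))) (Iic 0) := by
    rw [← Measure.map_neg_eq_self (volume : Measure ℝ)]
    let m : MeasurableEmbedding fun x : ℝ => -x := (Homeomorph.neg ℝ).measurableEmbedding
    rw [m.integrableOn_map_iff]
    simp_rw [Function.comp_def, abs_neg, neg_preimage, neg_Iic, neg_zero]
    exact Iff.mpr integrableOn_Ici_iff_integrableOn_Ioi h1
  rw [← integrableOn_univ, ← Set.Iic_union_Ioi (a := (0:ℝ))]
  exact h2.union h1

lemma integrable_osc_exp {a : ℂ} (ha : 0 < a.re) (w : ℝ) :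
    Integrable (fun t : ℝ => Complex.exp ((w * t : ℝ) * I) * Complex.exp (-(a * |t|))) := by
  apply (integrable_exp_neg_abs ha).mono' ?_ ?_
  · apply Continuous.aestronglyMeasurable
    apply Continuous.mul
    · exact Complex.continuous_exp.comp ((Complex.continuous_ofReal.comp
        (continuous_const.mul continuous_id)).mul continuous_const)
    · exact Complex.continuous_exp.comp
        (continuous_const.mul (Complex.continuous_ofReal.comp _root_.continuous_abs)).neg
  · filter_upwards with t
    simp [Complex.norm_exp]

lemma fourier_exp_abs {a : ℂ} (ha : 0 < a.re) (w : ℝ) :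
    ∫ t : ℝ, Complex.exp ((w * t : ℝ) * I) * Complex.exp (-(a * |t|))
      = 1 / (a + w * I) + 1 / (a - w * I) := by
  have hint := integrable_osc_exp ha w
  rw [← intervalIntegral.integral_Iic_add_Ioi (b := (0:ℝ)) hint.integrableOn hint.integrableOn]
  have hIic : (∫ t in Iic (0:ℝ), Complex.exp ((w * t : ℝ) * I) * Complex.exp (-(a * |t|)))
      = 1 / (a + w * I) := by
    have hneg := integral_comp_neg_Iic (0:ℝ)
      (fun s : ℝ => Complex.exp ((w * -s : ℝ) * I) * Complex.exp (-(a * |(-s : ℝ)|)))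
    simp only [neg_neg, neg_zero] at hneg
    rw [hneg]
    rw [setIntegral_congr_fun measurableSet_Ioi
      (g := fun s : ℝ => Complex.exp (-((a + w * I) * s))) ?_]
    · exact integral_cexp_neg_Ioi (by simpa)
    · intro s hs
      simp only
      rw [← Complex.exp_add]
      congr 1
      rw [abs_neg, abs_of_pos hs]
      push_cast
      ring
  have hIoi : (∫ t in Ioi (0:ℝ), Complex.exp ((w * t : ℝ) * I) * Complex.exp (-(a * |t|)))
      = 1 / (a - w * I) := by
    rw [setIntegral_congr_fun measurableSet_Ioi
      (g := fun s : ℝ => Complex.exp (-((a - w * I) * s))) ?_]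
    · exact integral_cexp_neg_Ioi (by simpa)
    · intro s hs
      simp only
      rw [← Complex.exp_add]
      congr 1
      rw [abs_of_pos hs]
      push_cast
      ring
  rw [hIic, hIoi]

lemma integrableF {γ : ℝ} (hγ : 0 < γ) :
    Integrable (fun p : ℝ => (p:ℂ)^2 / ((p:ℂ)^4 + (γ:ℂ)^4)) := by
  have hb : Integrable (fun p : ℝ => 2 / (γ^2 + p^2)) := by
    have h0 : Integrable (fun p : ℝ => (1 + (p * γ⁻¹)^2)⁻¹) :=
      integrable_inv_one_add_sq.comp_mul_right' (inv_ne_zero hγ.ne')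
    have h1 := h0.const_mul (2 / γ^2)
    apply h1.congr
    filter_upwards with p
    field_simp
  apply hb.mono' ?_ ?_
  · apply Continuous.aestronglyMeasurable
    apply Continuous.div
    · exact (Complex.continuous_ofReal.pow 2)
    · exact ((Complex.continuous_ofReal.pow 4).add continuous_const)
    · intro p
      have : ((p:ℂ)^4 + (γ:ℂ)^4) = ((p^4 + γ^4 : ℝ) : ℂ) := by push_cast; ring
      rw [this]
      exact_mod_cast (by positivity : (0:ℝ) < p^4 + γ^4).ne'
  · filter_upwards with p
    have hcast : (p:ℂ)^2 / ((p:ℂ)^4 + (γ:ℂ)^4) = ((p^2 / (p^4 + γ^4) : ℝ) : ℂ) := by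
      push_cast; ring
    rw [hcast, Complex.norm_real, Real.norm_eq_abs,
      _root_.abs_of_nonneg (by positivity)]
    rw [div_le_div_iff₀ (by positivity) (by positivity)]
    nlinarith [sq_nonneg (p^2 - γ^2), sq_nonneg p, sq_nonneg γ, sq_nonneg (p*γ)]


lemma re_ne_zero {z : ℂ} (h : z.re ≠ 0) : z ≠ 0 := fun h0 => by simp [h0] at h

lemma sum_inv_eq {A : ℂ} (q : ℝ) (h1 : A + q*I ≠ 0) (h2 : A - q*I ≠ 0) :
    1/(A + q*I) + 1/(A - q*I) = 2*A/(A^2 + (q:ℂ)^2) := by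
  have hApq : (A + q*I)*(A - q*I) = A^2 + (q:ℂ)^2 := by
    linear_combination -(q:ℂ)^2 * Complex.I_sq
  rw [div_add_div _ _ h1 h2, hApq]
  congr 1
  ring

lemma alg_step {u γ : ℝ} (hu : 0 < u) (hγ : 0 < γ) (h2u : 2*u^2 = γ^2) (q : ℝ) :
    (1/((u:ℂ)*(1+I) + q*I) + 1/((u:ℂ)*(1+I) - q*I))/(4*((u:ℂ)*(1+I)))
      + (1/((u:ℂ)*(1-I) + q*I) + 1/((u:ℂ)*(1-I) - q*I))/(4*((u:ℂ)*(1-I)))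
    = (q:ℂ)^2 / ((q:ℂ)^4 + (γ:ℂ)^4) := by
  set A : ℂ := (u:ℂ)*(1+I) with hA
  set B : ℂ := (u:ℂ)*(1-I) with hB
  have h2uC : (2:ℂ)*(u:ℂ)^2 = (γ:ℂ)^2 := by exact_mod_cast congrArg (Complex.ofReal) h2u
  have hA2 : A^2 = (γ:ℂ)^2 * I := by
    rw [hA]; linear_combination (u:ℂ)^2 * Complex.I_sq + I * h2uC
  have hB2 : B^2 = -((γ:ℂ)^2 * I) := by
    rw [hB]; linear_combination (u:ℂ)^2 * Complex.I_sq - I * h2uC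
  have hA1 : A + q*I ≠ 0 := re_ne_zero (by simp [hA]; exact hu.ne')
  have hA1' : A - q*I ≠ 0 := re_ne_zero (by simp [hA]; exact hu.ne')
  have hB1 : B + q*I ≠ 0 := re_ne_zero (by simp [hB]; exact hu.ne')
  have hB1' : B - q*I ≠ 0 := re_ne_zero (by simp [hB]; exact hu.ne')
  have hA0 : A ≠ 0 := re_ne_zero (by simp [hA]; exact hu.ne')
  have hB0 : B ≠ 0 := re_ne_zero (by simp [hB]; exact hu.ne')
  have hDA : A^2 + (q:ℂ)^2 ≠ 0 := by
    intro h
    rw [hA2] at h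
    have him := congrArg Complex.im h
    simp [← Complex.ofReal_pow] at him
    nlinarith
  have hDB : B^2 + (q:ℂ)^2 ≠ 0 := by
    intro h
    rw [hB2] at h
    have him := congrArg Complex.im h
    simp [← Complex.ofReal_pow] at him
    nlinarith
  rw [sum_inv_eq q hA1 hA1', sum_inv_eq q hB1 hB1']
  have divA : (2*A/(A^2 + (q:ℂ)^2))/(4*A) = 1/(2*(A^2 + (q:ℂ)^2)) := by
    field_simp
    ring
  have divB : (2*B/(B^2 + (q:ℂ)^2))/(4*B) = 1/(2*(B^2 + (q:ℂ)^2)) := by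
    field_simp
    ring
  rw [divA, divB, hA2, hB2]
  have hden1 : (2:ℂ)*((γ:ℂ)^2*I + (q:ℂ)^2) ≠ 0 := by
    intro h
    have him := congrArg Complex.im h
    simp [← Complex.ofReal_pow] at him
    nlinarith
  have hden2 : (2:ℂ)*(-((γ:ℂ)^2*I) + (q:ℂ)^2) ≠ 0 := by
    intro h
    have him := congrArg Complex.im h
    simp [← Complex.ofReal_pow] at him
    nlinarith
  have hprod : ((2:ℂ)*((γ:ℂ)^2*I + (q:ℂ)^2))*((2:ℂ)*(-((γ:ℂ)^2*I) + (q:ℂ)^2))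
      = 4*((q:ℂ)^4+(γ:ℂ)^4) := by
    linear_combination -(4:ℂ)*(γ:ℂ)^4*Complex.I_sq
  rw [show (2:ℂ)*((γ:ℂ)^2*I + (q:ℂ)^2) = 2*((γ:ℂ)^2*I + (q:ℂ)^2) from rfl]
  rw [div_add_div _ _ hden1 hden2, hprod]
  rw [show (1:ℂ)*(2*(-((γ:ℂ)^2*I) + (q:ℂ)^2)) + 2*((γ:ℂ)^2*I + (q:ℂ)^2)*1 = 4*(q:ℂ)^2 from by ring]
  rw [mul_div_mul_left _ _ (by norm_num : (4:ℂ) ≠ 0)]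

/-- Euclidean-time Schwinger function of the Gribov-type propagator
`D(p) = p²/(p⁴ + γ⁴)`: for `γ > 0` and `τ : ℝ`, the function
`p ↦ e^{ipτ} p²/(p⁴ + γ⁴)` is integrable on `ℝ`, and
`(1/(2π)) ∫ e^{ipτ} p²/(p⁴ + γ⁴) dp = (1/(2γ)) e^{−γ|τ|/√2} sin(π/4 − γ|τ|/√2)`. -/
theorem gribov_schwinger_function (γ : ℝ) (hγ : 0 < γ) (τ : ℝ) :
    Integrable (fun p : ℝ =>
      Complex.exp (Complex.I * p * τ) * ((p : ℂ) ^ 2 / ((p : ℂ) ^ 4 + (γ : ℂ) ^ 4))) ∧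
    ((1 / (2 * Real.pi) : ℝ) : ℂ) *
        (∫ p : ℝ, Complex.exp (Complex.I * p * τ) * ((p : ℂ) ^ 2 / ((p : ℂ) ^ 4 + (γ : ℂ) ^ 4))) =
      ((1 / (2 * γ) * Real.exp (-γ * |τ| / Real.sqrt 2) *
          Real.sin (Real.pi / 4 - γ * |τ| / Real.sqrt 2) : ℝ) : ℂ) := by
  have hs2 : Real.sqrt 2 ^ 2 = 2 := Real.sq_sqrt (by norm_num)
  have hs_pos : 0 < Real.sqrt 2 := Real.sqrt_pos.mpr (by norm_num)
  set u : ℝ := γ / Real.sqrt 2 with hu_def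
  have hu : 0 < u := by positivity
  have h2u : 2*u^2 = γ^2 := by
    rw [hu_def, div_pow, hs2]; field_simp
  set A : ℂ := (u:ℂ)*(1+I) with hA
  set B : ℂ := (u:ℂ)*(1-I) with hB
  have hAre : 0 < A.re := by simpa [hA] using hu
  have hBre : 0 < B.re := by simpa [hB] using hu
  have hA0 : A ≠ 0 := re_ne_zero hAre.ne'
  have hB0 : B ≠ 0 := re_ne_zero hBre.ne'
  set g : ℝ → ℂ := fun t =>
    Complex.exp (-(A * |t|)) / (4*A) + Complex.exp (-(B * |t|)) / (4*B) with hg_def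
  -- integrand integrability (part 1)
  have hInt1 : Integrable (fun p : ℝ =>
      Complex.exp (Complex.I * p * τ) * ((p : ℂ) ^ 2 / ((p : ℂ) ^ 4 + (γ : ℂ) ^ 4))) := by
    apply Integrable.bdd_mul (c := 1) (integrableF hγ) ?_ ?_
    · exact (Complex.continuous_exp.comp
        ((continuous_const.mul Complex.continuous_ofReal).mul continuous_const)).aestronglyMeasurable
    · filter_upwards with p
      simp [Complex.norm_exp]
  refine ⟨hInt1, ?_⟩
  -- continuity and integrability of g
  have hg_cont : Continuous g := by
    rw [hg_def]
    apply Continuous.add <;> apply Continuous.div_const <;>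
      exact Complex.continuous_exp.comp
        (continuous_const.mul (Complex.continuous_ofReal.comp _root_.continuous_abs)).neg
  have hoscA := fun w => integrable_osc_exp hAre w
  have hoscB := fun w => integrable_osc_exp hBre w
  have hg_int : Integrable g := by
    have h1 := hoscA 0
    have h2 := hoscB 0
    simp only [zero_mul, Complex.ofReal_zero, Complex.exp_zero, one_mul] at h1 h2
    exact (h1.div_const _).add (h2.div_const _)
  -- Fourier transform of g
  have hFg : ∀ ξ : ℝ, 𝓕 g ξ = ((2*π*ξ:ℝ):ℂ)^2 / (((2*π*ξ:ℝ):ℂ)^4 + (γ:ℂ)^4) := by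
    intro ξ
    set w : ℝ := -(2*π*ξ) with hw
    rw [Real.fourier_real_eq_integral_exp_smul]
    have hint : (∫ v:ℝ, Complex.exp ((-2*π*v*ξ : ℝ) * I) • g v)
        = ∫ v:ℝ, (Complex.exp ((w*v:ℝ) * I) * Complex.exp (-(A*|v|)))/(4*A)
            + (Complex.exp ((w*v:ℝ) * I) * Complex.exp (-(B*|v|)))/(4*B) := by
      congr 1
      funext v
      rw [smul_eq_mul, hg_def]
      have harg : ((-2*π*v*ξ : ℝ):ℂ) = ((w*v : ℝ):ℂ) := by rw [hw]; push_cast; ring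
      rw [harg]
      ring
    rw [hint, integral_add ((hoscA w).div_const _) ((hoscB w).div_const _),
      integral_div, integral_div, fourier_exp_abs hAre w, fourier_exp_abs hBre w,
      hA, hB, alg_step hu hγ h2u w]
    rw [hw]
    push_cast
    ring_nf
  have hFg_eq : 𝓕 g = fun ξ : ℝ => ((2*π*ξ:ℝ):ℂ)^2 / (((2*π*ξ:ℝ):ℂ)^4 + (γ:ℂ)^4) :=
    funext hFg
  have h2π : (2*π : ℝ) ≠ 0 := by positivity
  have hFg_int : Integrable (𝓕 g) := by
    rw [hFg_eq]
    exact (integrableF hγ).comp_mul_left' h2π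
  have hinv : 𝓕⁻ (𝓕 g) τ = g τ := hg_int.fourierInv_fourier_eq hFg_int hg_cont.continuousAt
  have hchg := MeasureTheory.Measure.integral_comp_mul_left
      (fun p : ℝ => Complex.exp (Complex.I * p * τ) * ((p:ℂ)^2/((p:ℂ)^4+(γ:ℂ)^4))) (2*π)
  have hinv2 : 𝓕⁻ (𝓕 g) τ = ∫ ξ : ℝ, (fun p : ℝ =>
      Complex.exp (Complex.I * p * τ) * ((p:ℂ)^2/((p:ℂ)^4+(γ:ℂ)^4))) (2*π*ξ) := by
    rw [Real.fourierInv_eq_fourier_neg,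
      Real.fourier_real_eq_integral_exp_smul, ]
    congr 1
    funext ξ
    rw [smul_eq_mul, hFg ξ]
    simp only
    congr 1
    push_cast
    ring
  have habs : |(2*π)⁻¹| = 1/(2*π) := by
    rw [abs_of_pos (by positivity), inv_eq_one_div]
  have heval : g τ = ((1 / (2 * γ) * Real.exp (-γ * |τ| / Real.sqrt 2) *
      Real.sin (π / 4 - γ * |τ| / Real.sqrt 2) : ℝ) : ℂ) := by
    set r : ℝ := u * |τ| with hr
    have hsu : Real.sqrt 2 * u = γ := by
      rw [hu_def]; field_simp
    have hγτ : -γ * |τ| / Real.sqrt 2 = -r := by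
      rw [hr, ← hsu]; field_simp
    have hγτ2 : π/4 - γ * |τ| / Real.sqrt 2 = π/4 - r := by
      rw [hr, ← hsu]; field_simp
    rw [hγτ, hγτ2]
    have hexpA : Complex.exp (-(A * |τ|))
        = ↑(Real.exp (-r)) * (↑(Real.cos r) - ↑(Real.sin r)*I) := by
      have h1 : -(A * (|τ|:ℝ)) = ↑(-r) + ↑(-r)*I := by rw [hr, hA]; push_cast; ring
      rw [h1, Complex.exp_add, Complex.exp_mul_I, ← Complex.ofReal_exp,
        ← Complex.ofReal_cos, ← Complex.ofReal_sin, Real.cos_neg, Real.sin_neg,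
        Complex.ofReal_neg]
      ring
    have hexpB : Complex.exp (-(B * |τ|))
        = ↑(Real.exp (-r)) * (↑(Real.cos r) + ↑(Real.sin r)*I) := by
      have h1 : -(B * (|τ|:ℝ)) = ↑(-r) + ↑(r)*I := by rw [hr, hB]; push_cast; ring
      rw [h1, Complex.exp_add, Complex.exp_mul_I, ← Complex.ofReal_exp,
        ← Complex.ofReal_cos, ← Complex.ofReal_sin]
    have hsin : Real.sin (π/4 - r) = Real.sqrt 2/2*(Real.cos r - Real.sin r) := by
      rw [Real.sin_sub, Real.sin_pi_div_four, Real.cos_pi_div_four]; ring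
    rw [hg_def]
    simp only
    rw [hexpA, hexpB, hsin]
    have h4A : (4:ℂ)*A ≠ 0 := by
      intro h; exact hA0 (by simpa using h)
    have h4B : (4:ℂ)*B ≠ 0 := by
      intro h; exact hB0 (by simpa using h)
    have h2uC : (2:ℂ)*(u:ℂ)^2 = (γ:ℂ)^2 := by exact_mod_cast congrArg Complex.ofReal h2u
    rw [div_add_div _ _ h4A h4B]
    have hABden : (4*A)*(4*B) = ((16*γ^2 : ℝ) : ℂ) := by
      rw [hA, hB]; push_cast; linear_combination (-16*(u:ℂ)^2)*Complex.I_sq + 16*h2uC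
    have hnum : ↑(Real.exp (-r)) * (↑(Real.cos r) - ↑(Real.sin r)*I) * (4*B)
          + (4*A) * (↑(Real.exp (-r)) * (↑(Real.cos r) + ↑(Real.sin r)*I))
        = ((8*Real.exp (-r)*u*(Real.cos r - Real.sin r) : ℝ) : ℂ) := by
      rw [hA, hB]; push_cast
      linear_combination (8*Complex.exp (-(r:ℂ))*(u:ℂ)*Complex.sin (r:ℂ))*Complex.I_sq
    rw [hABden, hnum, ← Complex.ofReal_div, Complex.ofReal_inj]
    rw [← hsu, mul_pow, hs2]
    field_simp
    ring
  calc ((1 / (2 * π) : ℝ) : ℂ) *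
        (∫ p : ℝ, Complex.exp (Complex.I * p * τ) * ((p:ℂ)^2/((p:ℂ)^4+(γ:ℂ)^4)))
      = ((|(2*π)⁻¹| : ℝ) : ℂ) *
        (∫ p : ℝ, Complex.exp (Complex.I * p * τ) * ((p:ℂ)^2/((p:ℂ)^4+(γ:ℂ)^4))) := by
        rw [habs]
    _ = |(2*π)⁻¹| • (∫ p : ℝ, Complex.exp (Complex.I * p * τ)
        * ((p:ℂ)^2/((p:ℂ)^4+(γ:ℂ)^4))) := Complex.real_smul.symm
    _ = ∫ ξ : ℝ, (fun p : ℝ =>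
        Complex.exp (Complex.I * p * τ) * ((p:ℂ)^2/((p:ℂ)^4+(γ:ℂ)^4))) (2*π*ξ) := hchg.symm
    _ = 𝓕⁻ (𝓕 g) τ := hinv2.symm
    _ = g τ := hinv
    _ = _ := heval
end

section
/- Let γ > 0 and define D : ℂ → ℂ by D(z) := (1/(2γ)) · e^{−iγz/√2} · sin(π/4 − iγz/√2). Then: (1) D is entire; (2) for every τ > 0, D(−iτ) = (1/(2γ)) · e^{−γτ/√2} · sin(π/4 − γτ/√2) (the Euclidean Schwinger function of the Gribov-type propagator); and (3) D is not polynomially bounded on ℝ: there exist no constants C > 0 and n ∈ ℕ such that |D(t)| ≤ C(1 + |t|)ⁿ for all t ∈ ℝ. -/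
open Complex

private lemma re_sin_aux (x y : ℝ) :
    (Complex.sin ((x : ℂ) + (y : ℂ) * Complex.I)).re = Real.sin x * Real.cosh y := by
  rw [Complex.sin_add, Complex.sin_mul_I, Complex.cos_mul_I, ← Complex.ofReal_sin,
    ← Complex.ofReal_cos, ← Complex.ofReal_sinh, ← Complex.ofReal_cosh]
  simp [Complex.add_re, Complex.mul_re]
  exact Or.inl (Complex.sin_ofReal_re x)

/-- For `γ > 0`, the function
`D(z) = (1/(2γ)) e^{−iγz/√2} sin(π/4 − iγz/√2)` is entire; for every `τ > 0`,
`D(−iτ) = (1/(2γ)) e^{−γτ/√2} sin(π/4 − γτ/√2)` (the Euclidean Schwinger function of the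
Gribov-type propagator); and `D` is not polynomially bounded on `ℝ`. -/
theorem gribov_reconstructed_wightman (γ : ℝ) (hγ : 0 < γ) (D : ℂ → ℂ)
    (hD : ∀ z : ℂ, D z = ((1 / (2 * γ) : ℝ) : ℂ) *
        Complex.exp (-Complex.I * (γ : ℂ) * z / (Real.sqrt 2 : ℂ)) *
        Complex.sin ((Real.pi / 4 : ℝ) - Complex.I * (γ : ℂ) * z / (Real.sqrt 2 : ℂ))) :
    Differentiable ℂ D ∧
    (∀ τ : ℝ, 0 < τ → D (-Complex.I * (τ : ℂ)) =
      ((1 / (2 * γ) * Real.exp (-γ * τ / Real.sqrt 2) *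
          Real.sin (Real.pi / 4 - γ * τ / Real.sqrt 2) : ℝ) : ℂ)) ∧
    ¬ ∃ (C : ℝ) (n : ℕ), 0 < C ∧ ∀ t : ℝ, ‖D (t : ℂ)‖ ≤ C * (1 + |t|) ^ n := by
  have hs2 : (0:ℝ) < Real.sqrt 2 := by positivity
  have hs2' : (Real.sqrt 2 : ℂ) ≠ 0 := by exact_mod_cast hs2.ne'
  have hDfun : D = fun z => ((1 / (2 * γ) : ℝ) : ℂ) *
      Complex.exp (-Complex.I * (γ : ℂ) * z / (Real.sqrt 2 : ℂ)) *
      Complex.sin ((Real.pi / 4 : ℝ) - Complex.I * (γ : ℂ) * z / (Real.sqrt 2 : ℂ)) :=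
    funext hD
  refine ⟨?_, ?_, ?_⟩
  · rw [hDfun]
    fun_prop
  · intro τ hτ
    have h1 : -Complex.I * (γ : ℂ) * (-Complex.I * (τ : ℂ)) / (Real.sqrt 2 : ℂ)
        = ((-γ * τ / Real.sqrt 2 : ℝ) : ℂ) := by
      push_cast
      linear_combination ((γ : ℂ) * (τ : ℂ) / (Real.sqrt 2 : ℂ)) * Complex.I_sq
    have h2 : ((Real.pi / 4 : ℝ) : ℂ) - Complex.I * (γ : ℂ) * (-Complex.I * (τ : ℂ)) / (Real.sqrt 2 : ℂ)
        = ((Real.pi / 4 - γ * τ / Real.sqrt 2 : ℝ) : ℂ) := by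
      push_cast
      linear_combination ((γ : ℂ) * (τ : ℂ) / (Real.sqrt 2 : ℂ)) * Complex.I_sq
    rw [hD, h1, h2, ← Complex.ofReal_exp, ← Complex.ofReal_sin]
    push_cast
    ring
  · rintro ⟨C, n, hC, hb⟩
    set a : ℝ := γ / Real.sqrt 2 with ha_def
    have ha : 0 < a := div_pos hγ hs2
    -- lower bound on ‖D t‖ for t ≥ 0
    have key : ∀ t : ℝ, 0 ≤ t →
        1 / (2 * γ) * (Real.sqrt 2 / 2) * (Real.exp (a * t) / 2) ≤ C * (1 + t) ^ n := by
      intro t ht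
      have hargs : ((Real.pi / 4 : ℝ) : ℂ) - Complex.I * (γ : ℂ) * (t : ℂ) / (Real.sqrt 2 : ℂ)
          = ((Real.pi / 4 : ℝ) : ℂ) + ((-(a * t) : ℝ) : ℂ) * Complex.I := by
        rw [ha_def]; push_cast; field_simp; ring
      have harg : -Complex.I * (γ : ℂ) * (t : ℂ) / (Real.sqrt 2 : ℂ)
          = ((-(a * t) : ℝ) : ℂ) * Complex.I := by
        rw [ha_def]; push_cast; field_simp
      have hmain : 1 / (2 * γ) * (Real.sqrt 2 / 2) * (Real.exp (a * t) / 2) ≤ ‖D (t : ℂ)‖ := by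
        rw [hD, hargs, harg, norm_mul, norm_mul]
        have he : ‖Complex.exp (((-(a * t) : ℝ) : ℂ) * Complex.I)‖ = 1 := by
          rw [Complex.norm_exp_ofReal_mul_I]
        rw [he]
        have hc : ‖((1 / (2 * γ) : ℝ) : ℂ)‖ = 1 / (2 * γ) := by
          rw [Complex.norm_real, Real.norm_eq_abs, _root_.abs_of_pos (by positivity)]
        rw [hc]
        have hsin : Real.sqrt 2 / 2 * (Real.exp (a * t) / 2) ≤
            ‖Complex.sin (((Real.pi / 4 : ℝ) : ℂ) + ((-(a * t) : ℝ) : ℂ) * Complex.I)‖ := by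
          have hre : (Complex.sin (((Real.pi / 4 : ℝ) : ℂ) + ((-(a * t) : ℝ) : ℂ) * Complex.I)).re
              = Real.sin (Real.pi / 4) * Real.cosh (a * t) := by
            rw [re_sin_aux, Real.cosh_neg]
          calc Real.sqrt 2 / 2 * (Real.exp (a * t) / 2)
              ≤ Real.sin (Real.pi / 4) * Real.cosh (a * t) := by
                rw [Real.sin_pi_div_four]
                have h4 : Real.exp (a * t) / 2 ≤ Real.cosh (a * t) := by
                  rw [Real.cosh_eq]
                  have := (Real.exp_pos (-(a * t))).le
                  linarith
                exact mul_le_mul_of_nonneg_left h4 (by positivity)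
            _ = |(Complex.sin (((Real.pi / 4 : ℝ) : ℂ) + ((-(a * t) : ℝ) : ℂ) * Complex.I)).re| := by
                rw [hre, _root_.abs_of_nonneg (by
                  rw [Real.sin_pi_div_four]; positivity)]
            _ ≤ ‖Complex.sin (((Real.pi / 4 : ℝ) : ℂ) + ((-(a * t) : ℝ) : ℂ) * Complex.I)‖ :=
                Complex.abs_re_le_norm _
        calc 1 / (2 * γ) * (Real.sqrt 2 / 2) * (Real.exp (a * t) / 2)
            = 1 / (2 * γ) * (Real.sqrt 2 / 2 * (Real.exp (a * t) / 2)) := by ring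
          _ ≤ 1 / (2 * γ) * ‖Complex.sin (((Real.pi / 4 : ℝ) : ℂ) + ((-(a * t) : ℝ) : ℂ) * Complex.I)‖ :=
              mul_le_mul_of_nonneg_left hsin (by positivity)
          _ = 1 / (2 * γ) * 1 * ‖Complex.sin (((Real.pi / 4 : ℝ) : ℂ) + ((-(a * t) : ℝ) : ℂ) * Complex.I)‖ := by
              ring
      have hbt := hb t
      rw [_root_.abs_of_nonneg ht] at hbt
      exact hmain.trans hbt
    -- contradiction via growth of exp
    set K : ℝ := 1 / (2 * γ) * (Real.sqrt 2 / 2) * (1 / 2) with hK_def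
    have hK : 0 < K := by positivity
    have htend : Filter.Tendsto (fun t : ℝ => Real.exp (a * t) / t ^ n) Filter.atTop
        Filter.atTop := by
      have h1 : Filter.Tendsto (fun t : ℝ => a * t) Filter.atTop Filter.atTop :=
        Filter.tendsto_atTop_atTop_of_monotone
          (fun x y hxy => by nlinarith)
          (fun b => ⟨b / a, le_of_eq (by field_simp)⟩)
      have h2 := (Real.tendsto_exp_div_pow_atTop n).comp h1
      have h3 : Filter.Tendsto (fun t : ℝ => a ^ n * (Real.exp (a * t) / (a * t) ^ n))
          Filter.atTop Filter.atTop := h2.const_mul_atTop (pow_pos ha n)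
      apply h3.congr'
      filter_upwards [Filter.eventually_gt_atTop 0] with t ht
      have : t ^ n ≠ 0 := by positivity
      field_simp [mul_pow]
      ring
    have hev : ∀ᶠ t : ℝ in Filter.atTop,
        C * 2 ^ n / K < Real.exp (a * t) / t ^ n :=
      htend.eventually_gt_atTop _
    obtain ⟨t, ht1, ht2⟩ := (hev.and (Filter.eventually_ge_atTop 1)).exists
    have htpos : (0:ℝ) < t := lt_of_lt_of_le one_pos ht2
    have hkey := key t htpos.le
    have hpow : (1 + t) ^ n ≤ 2 ^ n * t ^ n := by
      calc (1 + t) ^ n ≤ (2 * t) ^ n := by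
            apply pow_le_pow_left₀ (by linarith) (by linarith)
        _ = 2 ^ n * t ^ n := by rw [mul_pow]
      -- done
    have hlt : C * (1 + t) ^ n < K * Real.exp (a * t) := by
      have h1 : C * (1 + t) ^ n ≤ C * (2 ^ n * t ^ n) :=
        mul_le_mul_of_nonneg_left hpow hC.le
      have h2 : C * 2 ^ n / K * t ^ n < Real.exp (a * t) / t ^ n * t ^ n := by
        apply mul_lt_mul_of_pos_right ht1 (by positivity)
      rw [div_mul_cancel₀ _ (by positivity : (t:ℝ) ^ n ≠ 0)] at h2
      have : C * (2 ^ n * t ^ n) = C * 2 ^ n / K * t ^ n * K := by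
        field_simp
      rw [this] at h1
      calc C * (1 + t) ^ n ≤ C * 2 ^ n / K * t ^ n * K := h1
        _ < Real.exp (a * t) * K := by
            exact mul_lt_mul_of_pos_right h2 hK
        _ = K * Real.exp (a * t) := by ring
    have : K * Real.exp (a * t) ≤ C * (1 + t) ^ n := by
      have := key t htpos.le
      calc K * Real.exp (a * t)
          = 1 / (2 * γ) * (Real.sqrt 2 / 2) * (Real.exp (a * t) / 2) := by
            rw [hK_def]; ring
        _ ≤ C * (1 + t) ^ n := this
    linarith
end

section
/- Let ζ ∈ ℂ ∖ (−∞,0] and let z = (z₀, z₁, z₂, z₃) ∈ ℂ⁴ lie in the forward tube T. Then the function ℝ³ → ℂ given by k ↦ (2 E_ζ(k))⁻¹ · exp(−i E_ζ(k) z₀ + i(k₁z₁ + k₂z₂ + k₃z₃)) is a Schwartz function of k (it is smooth and, together with all its derivatives, decays faster than any inverse power of ‖k‖). -/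
open Complex

abbrev Kspace := EuclideanSpace ℝ (Fin 3)

noncomputable def mulA : ℂ →L[ℝ] (ℂ →L[ℝ] ℂ) :=
  (ContinuousLinearMap.restrictScalarsL ℂ ℂ ℂ ℝ ℝ).comp
    ((ContinuousLinearMap.mul ℂ ℂ).restrictScalars ℝ)

lemma mulA_apply (c x : ℂ) : mulA c x = c * x := rfl

lemma mulA_eq_smul_one (c : ℂ) : mulA c = c • (1 : ℂ →L[ℝ] ℂ) := by
  ext x
  simp [mulA_apply]

lemma mulA_norm_apply (c : ℂ) : ‖mulA c‖ ≤ ‖c‖ := by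
  refine ContinuousLinearMap.opNorm_le_bound _ (norm_nonneg c) fun x => ?_
  rw [mulA_apply, norm_mul]

lemma mulA_norm : ‖mulA‖ ≤ 1 := by
  refine ContinuousLinearMap.opNorm_le_bound _ zero_le_one fun c => ?_
  simpa using mulA_norm_apply c

lemma exp_iter_bound (n : ℕ) (w : ℂ) :
    ‖iteratedFDeriv ℝ n Complex.exp w‖ ≤ Real.exp w.re := by
  induction n generalizing w with
  | zero => simp [Complex.norm_exp]
  | succ n ih =>
    rw [← norm_iteratedFDeriv_fderiv]
    have hfd : (fderiv ℝ Complex.exp) = fun w => mulA (Complex.exp w) := by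
      funext w
      rw [(Complex.hasDerivAt_exp w).complexToReal_fderiv.fderiv, mulA_eq_smul_one]
    rw [hfd]
    have : iteratedFDeriv ℝ n (fun w => mulA (Complex.exp w)) w
        = mulA.compContinuousMultilinearMap (iteratedFDeriv ℝ n Complex.exp w) :=
      mulA.iteratedFDeriv_comp_left (x := w) (Complex.contDiff_exp (𝕜 := ℝ)).contDiffAt le_top
    rw [this]
    calc ‖mulA.compContinuousMultilinearMap (iteratedFDeriv ℝ n Complex.exp w)‖
        ≤ ‖mulA‖ * ‖iteratedFDeriv ℝ n Complex.exp w‖ :=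
          mulA.norm_compContinuousMultilinearMap_le _
      _ ≤ 1 * Real.exp w.re := by
          apply mul_le_mul mulA_norm (ih w) (norm_nonneg _) zero_le_one
      _ = Real.exp w.re := one_mul _

section clm
variable {E F : Type*} [NormedAddCommGroup E] [NormedSpace ℝ E]
  [NormedAddCommGroup F] [NormedSpace ℝ F]

lemma clm_iFD_one (T : E →L[ℝ] F) (x : E) : ‖iteratedFDeriv ℝ 1 (⇑T) x‖ = ‖T‖ := by
  rw [← norm_iteratedFDeriv_fderiv (n := 0)]
  simp [T.fderiv]

lemma clm_iFD_two_add (T : E →L[ℝ] F) (m : ℕ) (x : E) :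
    ‖iteratedFDeriv ℝ (m + 2) (⇑T) x‖ = 0 := by
  rw [← norm_iteratedFDeriv_fderiv (n := m + 1)]
  have : (fderiv ℝ (⇑T)) = fun _ : E => T := by
    funext y; exact T.fderiv
  rw [this, iteratedFDeriv_const_of_ne (by omega)]
  simp

lemma clm_iFD_le (T : E →L[ℝ] F) (i : ℕ) (hi : 1 ≤ i) (x : E) :
    ‖iteratedFDeriv ℝ i (⇑T) x‖ ≤ ‖T‖ := by
  match i, hi with
  | 1, _ => exact le_of_eq (clm_iFD_one T x)
  | (m+2), _ => rw [clm_iFD_two_add T m x]; exact norm_nonneg _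

end clm

lemma exists_forall_le (f : ℕ → ℝ) (n : ℕ) : ∃ C, ∀ i ≤ n, f i ≤ C := by
  induction n with
  | zero => exact ⟨f 0, fun i hi => by simp [Nat.le_zero.mp hi]⟩
  | succ n ih =>
    obtain ⟨C, hC⟩ := ih
    refine ⟨max C (f (n+1)), fun i hi => ?_⟩
    rcases Nat.le_succ_iff.mp hi with h | h
    · exact le_trans (hC i h) (le_max_left _ _)
    · subst h; exact le_max_right _ _
  
lemma pow_le_exp' (M : ℕ) (x : ℝ) (hx : 0 ≤ x) : x ^ M ≤ M.factorial * Real.exp x := by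
  have h := Real.sum_le_exp_of_nonneg hx (M + 1)
  have h2 : x ^ M / M.factorial ≤ ∑ i ∈ Finset.range (M+1), x ^ i / i.factorial := by
    refine Finset.single_le_sum (f := fun i => x ^ i / (i.factorial : ℝ)) ?_ ?_
    · intro i _; positivity
    · simp
  have h3 : x ^ M / M.factorial ≤ Real.exp x := le_trans h2 h
  have hM : (0:ℝ) < M.factorial := by positivity
  calc x ^ M = (x ^ M / M.factorial) * M.factorial := by field_simp
    _ ≤ Real.exp x * M.factorial := by
        exact mul_le_mul_of_nonneg_right h3 (le_of_lt hM)
    _ = M.factorial * Real.exp x := mul_comm _ _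

lemma poly_exp_bound (M : ℕ) (c C₀ : ℝ) (hc : 0 < c) :
    ∃ C, ∀ t : ℝ, 0 ≤ t → (1 + t) ^ M * Real.exp (C₀ - c * t) ≤ C := by
  refine ⟨(M.factorial / c ^ M) * Real.exp (C₀ + c), fun t ht => ?_⟩
  have h1 : (0:ℝ) < 1 + t := by linarith
  have key : (c * (1 + t)) ^ M ≤ M.factorial * Real.exp (c * (1 + t)) :=
    pow_le_exp' M _ (by positivity)
  have key2 : (1 + t) ^ M ≤ (M.factorial / c ^ M) * Real.exp (c * (1 + t)) := by
    rw [mul_pow] at key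
    rw [div_mul_eq_mul_div, le_div_iff₀ (by positivity)]
    calc (1+t)^M * c^M = c ^ M * (1+t)^M := mul_comm _ _
      _ ≤ M.factorial * Real.exp (c * (1+t)) := key
  calc (1 + t) ^ M * Real.exp (C₀ - c * t)
      ≤ ((M.factorial / c ^ M) * Real.exp (c * (1 + t))) * Real.exp (C₀ - c * t) := by
        exact mul_le_mul_of_nonneg_right key2 (Real.exp_pos _).le
    _ = (M.factorial / c ^ M) * Real.exp (C₀ + c) := by
        rw [mul_assoc, ← Real.exp_add]; ring_nf

set_option maxHeartbeats 1000000

-- smoothness of cpow on the slit plane, over ℝ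
lemma contDiffOn_cpow_slit (c : ℂ) :
    ContDiffOn ℝ ⊤ (fun w : ℂ => w ^ c) Complex.slitPlane := by
  intro w hw
  have h1 : ContDiffAt ℂ ⊤ (fun w : ℂ => w ^ c) w := by
    have h2 : ContDiffAt ℂ ⊤ (fun w : ℂ => Complex.exp (Complex.log w * c)) w :=
      (Complex.contDiff_exp (𝕜 := ℂ)).contDiffAt.comp w
        ((Complex.contDiffAt_log hw).mul contDiffAt_const)
    refine h2.congr_of_eventuallyEq ?_
    filter_upwards [Complex.isOpen_slitPlane.mem_nhds hw] with x hx
    exact Complex.cpow_def_of_ne_zero (Complex.slitPlane_ne_zero hx) c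
  exact (h1.restrict_scalars ℝ).contDiffWithinAt

lemma fderivWithin_cpow_slit (c : ℂ) {w : ℂ} (hw : w ∈ Complex.slitPlane) :
    fderivWithin ℝ (fun w : ℂ => w ^ c) Complex.slitPlane w
      = mulA (c * w ^ (c - 1)) := by
  have h := ((Complex.hasStrictDerivAt_cpow_const (c := c) hw).hasDerivAt).complexToReal_fderiv
  rw [(h.hasFDerivWithinAt).fderivWithin (Complex.isOpen_slitPlane.uniqueDiffOn w hw),
    mulA_eq_smul_one]

lemma cpow_iter_bound (n m : ℕ) :
    ∃ C : ℝ, 0 ≤ C ∧ ∀ w ∈ Complex.slitPlane,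
      ‖iteratedFDerivWithin ℝ n (fun w : ℂ => w ^ ((1:ℂ)/2 - m)) Complex.slitPlane w‖
        ≤ C * ‖w‖ ^ ((1:ℝ)/2 - (m + n)) := by
  induction n generalizing m with
  | zero =>
    refine ⟨1, zero_le_one, fun w hw => ?_⟩
    rw [norm_iteratedFDerivWithin_zero, one_mul]
    have hw0 : w ≠ 0 := Complex.slitPlane_ne_zero hw
    have : ‖w ^ ((1:ℂ)/2 - m)‖
        = ‖w‖ ^ (((1:ℂ)/2 - m).re) / Real.exp (Complex.arg w * ((1:ℂ)/2 - m).im) := by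
      exact Complex.norm_cpow_of_ne_zero hw0 _
    rw [this]
    simp only [Complex.sub_re, Complex.sub_im, Complex.div_re, Complex.div_im]
    norm_num
  | succ n ih =>
    obtain ⟨C, hC0, hC⟩ := ih (m + 1)
    refine ⟨(1/2 + m) * C + C, by positivity, fun w hw => ?_⟩
    have hUD : UniqueDiffOn ℝ Complex.slitPlane := Complex.isOpen_slitPlane.uniqueDiffOn
    rw [← norm_iteratedFDerivWithin_fderivWithin hUD hw]
    set B : ℂ →L[ℝ] (ℂ →L[ℝ] ℂ) := mulA.comp (mulA ((1:ℂ)/2 - m)) with hB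
    have hEq : Set.EqOn (fderivWithin ℝ (fun w : ℂ => w ^ ((1:ℂ)/2 - m)) Complex.slitPlane)
        (fun w : ℂ => B (w ^ ((1:ℂ)/2 - (m+1:ℕ)))) Complex.slitPlane := by
      intro x hx
      rw [fderivWithin_cpow_slit _ hx]
      have : ((1:ℂ)/2 - m) - 1 = (1:ℂ)/2 - (m+1:ℕ) := by push_cast; ring
      rw [this]
      rfl
    rw [iteratedFDerivWithin_congr hEq hw]
    have hcomp : iteratedFDerivWithin ℝ n
          (fun w : ℂ => B (w ^ ((1:ℂ)/2 - (m+1:ℕ)))) Complex.slitPlane w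
        = B.compContinuousMultilinearMap (iteratedFDerivWithin ℝ n
            (fun w : ℂ => w ^ ((1:ℂ)/2 - (m+1:ℕ))) Complex.slitPlane w) :=
      B.iteratedFDerivWithin_comp_left (contDiffOn_cpow_slit _ w hw) hUD hw le_top
    rw [hcomp]
    have hBnorm : ‖B‖ ≤ 1/2 + m := by
      calc ‖B‖ ≤ ‖mulA‖ * ‖mulA ((1:ℂ)/2 - m)‖ := ContinuousLinearMap.opNorm_comp_le _ _
        _ ≤ 1 * ((1:ℝ)/2 + m) := by
            apply mul_le_mul mulA_norm ?_ (norm_nonneg _) zero_le_one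
            calc ‖mulA ((1:ℂ)/2 - m)‖ ≤ ‖(1:ℂ)/2 - (m:ℂ)‖ := mulA_norm_apply _
              _ ≤ ‖(1:ℂ)/2‖ + ‖(m:ℂ)‖ := norm_sub_le _ _
              _ = 1/2 + m := by simp
        _ = 1/2 + m := one_mul _
    have hexp : ((1:ℝ)/2 - ((m:ℝ)+1+n)) = ((1:ℝ)/2 - (m + (n+1:ℕ))) := by push_cast; ring
    calc ‖B.compContinuousMultilinearMap (iteratedFDerivWithin ℝ n
            (fun w : ℂ => w ^ ((1:ℂ)/2 - (m+1:ℕ))) Complex.slitPlane w)‖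
        ≤ ‖B‖ * ‖iteratedFDerivWithin ℝ n
            (fun w : ℂ => w ^ ((1:ℂ)/2 - (m+1:ℕ))) Complex.slitPlane w‖ :=
          B.norm_compContinuousMultilinearMap_le _
      _ ≤ (1/2 + m) * (C * ‖w‖ ^ ((1:ℝ)/2 - ((m+1:ℕ) + n))) := by
          apply mul_le_mul hBnorm (hC w hw) (norm_nonneg _) (by positivity)
      _ ≤ ((1/2 + m) * C + C) * ‖w‖ ^ ((1:ℝ)/2 - (m + (n+1:ℕ))) := by
          have h1 : ((1:ℝ)/2 - ((m+1:ℕ) + n)) = ((1:ℝ)/2 - (m + (n+1:ℕ))) := by push_cast; ring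
          rw [h1, ← mul_assoc]
          apply mul_le_mul_of_nonneg_right ?_ (by positivity)
          nlinarith [hC0]





set_option synthInstance.maxHeartbeats 1000000
set_option maxHeartbeats 1000000

lemma nsq_fderiv : (fderiv ℝ (fun x : Kspace => ‖x‖^2))
    = fun x => (2:ℝ) • (innerSL ℝ (E := Kspace)) x := by
  funext x
  rw [(hasStrictFDerivAt_norm_sq x).hasFDerivAt.fderiv]
  simp [two_smul]

lemma nsq_iFD_one (x : Kspace) :
    ‖iteratedFDeriv ℝ 1 (fun x : Kspace => ‖x‖^2) x‖ = 2 * ‖x‖ := by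
  rw [← norm_iteratedFDeriv_fderiv (n := 0), norm_iteratedFDeriv_zero, nsq_fderiv]
  simp only [ContinuousLinearMap.coe_smul', Pi.smul_apply]
  rw [norm_smul, innerSL_apply_norm]
  norm_num

lemma nsq_iFD_ge_two (i : ℕ) (hi : 2 ≤ i) (x : Kspace) :
    ‖iteratedFDeriv ℝ i (fun x : Kspace => ‖x‖^2) x‖ ≤ 2 := by
  obtain ⟨j, rfl⟩ : ∃ j, i = j + 1 := ⟨i - 1, by omega⟩
  rw [← norm_iteratedFDeriv_fderiv, nsq_fderiv]
  have h1 : (fun x : Kspace => (2:ℝ) • (innerSL ℝ (E := Kspace)) x)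
      = ⇑((2:ℝ) • (innerSL ℝ (E := Kspace))) := by
    funext x; simp
  rw [h1]
  have hT : ‖(2:ℝ) • (innerSL ℝ (E := Kspace))‖ ≤ 2 := by
    refine ContinuousLinearMap.opNorm_le_bound _ (by norm_num) fun y => ?_
    have : ((2:ℝ) • (innerSL ℝ (E := Kspace))) y = (2:ℝ) • ((innerSL ℝ (E := Kspace)) y) := rfl
    rw [this, two_smul]
    calc ‖(innerSL ℝ (E := Kspace)) y + (innerSL ℝ (E := Kspace)) y‖
        ≤ ‖(innerSL ℝ (E := Kspace)) y‖ + ‖(innerSL ℝ (E := Kspace)) y‖ := norm_add_le _ _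
      _ = 2 * ‖y‖ := by rw [innerSL_apply_norm]; ring
  rcases Nat.lt_or_ge j 2 with h | h
  · have hj : j = 1 := by omega
    subst hj
    exact le_trans (clm_iFD_le _ 1 le_rfl x) hT
  · obtain ⟨l, rfl⟩ : ∃ l, j = l + 2 := ⟨j - 2, by omega⟩
    rw [clm_iFD_two_add]
    norm_num

lemma q_iFD_bound (ζ : ℂ) (i : ℕ) (hi : 1 ≤ i) (k : Kspace) :
    ‖iteratedFDeriv ℝ i (fun k : Kspace => (((‖k‖^2 : ℝ) : ℂ)) + ζ) k‖
      ≤ (2 * (1 + ‖k‖)) ^ i := by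
  have hsm : ContDiff ℝ (i:ℕ∞) (fun k : Kspace => ((‖k‖^2 : ℝ) : ℂ)) := by
    exact Complex.ofRealCLM.contDiff.comp (contDiff_norm_sq ℝ (n := (i:ℕ∞)))
  have hadd : ∀ x, iteratedFDeriv ℝ i (fun k : Kspace => (((‖k‖^2 : ℝ) : ℂ)) + ζ) x
      = iteratedFDeriv ℝ i (fun k : Kspace => ((‖k‖^2 : ℝ) : ℂ)) x
        + iteratedFDeriv ℝ i (fun _ : Kspace => ζ) x := fun x =>
    iteratedFDeriv_add_apply hsm.contDiffAt contDiff_const.contDiffAt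
  have hconst : iteratedFDeriv ℝ i (fun _ : Kspace => ζ) k = 0 := by
    rw [iteratedFDeriv_const_of_ne (by omega)]; rfl
  have hiso : ‖iteratedFDeriv ℝ i (fun k : Kspace => ((‖k‖^2 : ℝ) : ℂ)) k‖
      = ‖iteratedFDeriv ℝ i (fun k : Kspace => ‖k‖^2) k‖ := by
    have : (fun k : Kspace => ((‖k‖^2 : ℝ) : ℂ))
        = (Complex.ofRealLI) ∘ (fun k : Kspace => ‖k‖^2) := rfl
    rw [this]
    exact Complex.ofRealLI.norm_iteratedFDeriv_comp_left
      (contDiff_norm_sq ℝ (n := (i:ℕ∞))).contDiffAt le_rfl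
  have hk1 : (1:ℝ) ≤ 1 + ‖k‖ := by linarith [norm_nonneg k]
  have hD2 : (2:ℝ) ≤ 2 * (1 + ‖k‖) := by linarith
  rw [hadd k, hconst, add_zero, hiso]
  rcases Nat.lt_or_ge i 2 with h | h
  · have hi1 : i = 1 := by omega
    subst hi1
    rw [nsq_iFD_one, pow_one]
    linarith [norm_nonneg k]
  · calc ‖iteratedFDeriv ℝ i (fun k : Kspace => ‖k‖^2) k‖ ≤ 2 := nsq_iFD_ge_two i h k
      _ ≤ 2 * (1 + ‖k‖) := hD2
      _ ≤ (2 * (1 + ‖k‖)) ^ i := by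
          apply le_self_pow₀ (by linarith) (by omega)

lemma sqrt_sq' {w : ℂ} (hw0 : w ≠ 0) : (w ^ ((1:ℂ)/2))^2 = w := by
  rw [sq, ← Complex.cpow_add _ _ hw0]
  norm_num

lemma sqrt_re_nonneg {w : ℂ} (hw : w ∈ Complex.slitPlane) : 0 ≤ (w ^ ((1:ℂ)/2)).re := by
  have hw0 : w ≠ 0 := Complex.slitPlane_ne_zero hw
  rw [Complex.cpow_def_of_ne_zero hw0, Complex.exp_re]
  have him : (Complex.log w * ((1:ℂ)/2)).im = Complex.arg w / 2 := by
    simp [Complex.mul_im, Complex.log_im]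
    ring
  rw [him]
  apply mul_nonneg (Real.exp_pos _).le
  apply Real.cos_nonneg_of_mem_Icc
  constructor
  · have := Complex.neg_pi_lt_arg w
    linarith
  · have := Complex.arg_le_pi w
    linarith

lemma sqrt_re_sq {w : ℂ} (hw0 : w ≠ 0) :
    (w ^ ((1:ℂ)/2)).re ^ 2 = (‖w‖ + w.re) / 2 := by
  set E := w ^ ((1:ℂ)/2) with hE
  have h1 : E.re^2 - E.im^2 = w.re := by
    have := congrArg Complex.re (sqrt_sq' hw0)
    rw [sq, Complex.mul_re] at this
    nlinarith [this]
  have h2 : E.re^2 + E.im^2 = ‖w‖ := by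
    have := congrArg norm (sqrt_sq' hw0)
    rw [norm_pow, Complex.sq_norm, Complex.normSq_apply] at this
    nlinarith [this]
  nlinarith [h1, h2]

lemma sqrt_im_sq {w : ℂ} (hw0 : w ≠ 0) :
    (w ^ ((1:ℂ)/2)).im ^ 2 = (‖w‖ - w.re) / 2 := by
  set E := w ^ ((1:ℂ)/2) with hE
  have h1 : E.re^2 - E.im^2 = w.re := by
    have := congrArg Complex.re (sqrt_sq' hw0)
    rw [sq, Complex.mul_re] at this
    nlinarith [this]
  have h2 : E.re^2 + E.im^2 = ‖w‖ := by
    have := congrArg norm (sqrt_sq' hw0)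
    rw [norm_pow, Complex.sq_norm, Complex.normSq_apply] at this
    nlinarith [this]
  nlinarith [h1, h2]

lemma zeta_pos_or_im {ζ : ℂ} (hζ : ∀ x : ℝ, x ≤ 0 → ζ ≠ (x : ℂ)) :
    (0 < ζ.re ∧ ζ.im = 0) ∨ ζ.im ≠ 0 := by
  by_cases him : ζ.im = 0
  · left
    refine ⟨?_, him⟩
    by_contra hre
    push_neg at hre
    exact hζ ζ.re hre (Complex.ext (by simp) (by simp [him]))
  · right; exact him

lemma slit_mem {ζ : ℂ} (hζ : ∀ x : ℝ, x ≤ 0 → ζ ≠ (x : ℂ)) (t : ℝ) (ht : 0 ≤ t) :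
    (t : ℂ) + ζ ∈ Complex.slitPlane := by
  rw [Complex.mem_slitPlane_iff]
  rcases zeta_pos_or_im hζ with ⟨h1, _⟩ | h2
  · left; simp only [Complex.add_re, Complex.ofReal_re]; linarith
  · right; simpa using h2

lemma delta_bound {ζ : ℂ} (hζ : ∀ x : ℝ, x ≤ 0 → ζ ≠ (x : ℂ)) :
    ∃ δ : ℝ, 0 < δ ∧ ∀ t : ℝ, 0 ≤ t → δ ≤ ‖(t:ℂ) + ζ‖ := by
  rcases zeta_pos_or_im hζ with ⟨h1, _⟩ | h2
  · refine ⟨ζ.re, h1, fun t ht => ?_⟩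
    calc ζ.re ≤ ((t:ℂ) + ζ).re := by simp only [Complex.add_re, Complex.ofReal_re]; linarith
      _ ≤ ‖(t:ℂ) + ζ‖ := Complex.re_le_norm _
  · refine ⟨|ζ.im|, abs_pos.mpr h2, fun t ht => ?_⟩
    calc |ζ.im| = |((t:ℂ) + ζ).im| := by simp
      _ ≤ ‖(t:ℂ) + ζ‖ := Complex.abs_im_le_norm _

lemma q_smooth (ζ : ℂ) : ContDiff ℝ ⊤ (fun k : Kspace => (((‖k‖^2 : ℝ) : ℂ)) + ζ) :=
  (Complex.ofRealCLM.contDiff.comp (contDiff_norm_sq ℝ)).add contDiff_const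

lemma Em_smooth (ζ : ℂ) (hζ : ∀ x : ℝ, x ≤ 0 → ζ ≠ (x : ℂ)) (m : ℕ) :
    ContDiff ℝ ⊤ (fun k : Kspace => (((‖k‖^2:ℝ):ℂ) + ζ) ^ ((1:ℂ)/2 - (m:ℕ))) :=
  (contDiffOn_cpow_slit _).comp_contDiff (q_smooth ζ)
    (fun k => slit_mem hζ _ (by positivity))

lemma Em_bound (ζ : ℂ) (hζ : ∀ x : ℝ, x ≤ 0 → ζ ≠ (x : ℂ)) (m n : ℕ) :
    ∃ C, 0 ≤ C ∧ ∀ k : Kspace,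
      ‖iteratedFDeriv ℝ n (fun k : Kspace => (((‖k‖^2:ℝ):ℂ) + ζ) ^ ((1:ℂ)/2 - (m:ℕ))) k‖
        ≤ C * (1+‖k‖)^(n+1) := by
  obtain ⟨δ, hδ, hδq⟩ := delta_bound hζ
  -- per-order constants for the cpow derivatives
  have hAi : ∀ i : ℕ, ∃ A : ℝ, 0 ≤ A ∧ ∀ w ∈ Complex.slitPlane, δ ≤ ‖w‖ →
      ‖iteratedFDerivWithin ℝ i (fun w : ℂ => w ^ ((1:ℂ)/2 - m)) Complex.slitPlane w‖
        ≤ A * ‖w‖ ^ ((1:ℝ)/2) := by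
    intro i
    obtain ⟨Ci, hCi0, hCi⟩ := cpow_iter_bound i m
    refine ⟨Ci * (δ ^ ((m:ℝ) + i))⁻¹, by positivity, fun w hw hδw => ?_⟩
    have hw0 : (0:ℝ) < ‖w‖ := lt_of_lt_of_le hδ hδw
    have hsplit : ‖w‖ ^ ((1:ℝ)/2 - (m + i))
        = ‖w‖ ^ ((1:ℝ)/2) * (‖w‖ ^ ((m:ℝ) + i))⁻¹ := by
      rw [← Real.rpow_neg hw0.le, ← Real.rpow_add hw0]
      ring_nf
    have hpow : δ ^ ((m:ℝ) + i) ≤ ‖w‖ ^ ((m:ℝ) + i) :=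
      Real.rpow_le_rpow hδ.le hδw (by positivity)
    have hinv : (‖w‖ ^ ((m:ℝ) + i))⁻¹ ≤ (δ ^ ((m:ℝ) + i))⁻¹ := by
      apply inv_anti₀ (by positivity) hpow
    calc ‖iteratedFDerivWithin ℝ i (fun w : ℂ => w ^ ((1:ℂ)/2 - m)) Complex.slitPlane w‖
        ≤ Ci * ‖w‖ ^ ((1:ℝ)/2 - (m + i)) := hCi w hw
      _ = Ci * ((‖w‖ ^ ((m:ℝ) + i))⁻¹ * ‖w‖ ^ ((1:ℝ)/2)) := by
          rw [hsplit]; ring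
      _ ≤ Ci * ((δ ^ ((m:ℝ) + i))⁻¹ * ‖w‖ ^ ((1:ℝ)/2)) := by
          apply mul_le_mul_of_nonneg_left ?_ hCi0
          exact mul_le_mul_of_nonneg_right hinv (by positivity)
      _ = Ci * (δ ^ ((m:ℝ) + i))⁻¹ * ‖w‖ ^ ((1:ℝ)/2) := by ring
  choose A hA0 hA using hAi
  obtain ⟨Am, hAm⟩ := exists_forall_le A n
  set Amax := max Am 0 with hAmax
  have hAmax0 : 0 ≤ Amax := le_max_right _ _
  have hAi' : ∀ i ≤ n, A i ≤ Amax := fun i hi => le_trans (hAm i hi) (le_max_left _ _)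
  -- the sqrt of |q k| is at most (1+abs ζ)(1+‖k‖)
  have habsq : ∀ k : Kspace, ‖((‖k‖^2:ℝ):ℂ) + ζ‖ ^ ((1:ℝ)/2)
      ≤ (1 + ‖ζ‖) * (1 + ‖k‖) := by
    intro k
    have h1 : ‖((‖k‖^2:ℝ):ℂ) + ζ‖ ≤ ((1 + ‖ζ‖) * (1 + ‖k‖))^2 := by
      calc ‖((‖k‖^2:ℝ):ℂ) + ζ‖ ≤ ‖((‖k‖^2:ℝ):ℂ)‖ + ‖ζ‖ :=
            norm_add_le _ _
        _ = ‖k‖^2 + ‖ζ‖ := by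
            rw [Complex.norm_real, Real.norm_eq_abs, _root_.abs_of_nonneg (by positivity : (0:ℝ) ≤ ‖k‖^2)]
        _ ≤ ((1 + ‖ζ‖) * (1 + ‖k‖))^2 := by
            nlinarith [norm_nonneg k, norm_nonneg ζ,
              mul_nonneg (norm_nonneg ζ) (sq_nonneg ‖k‖),
              mul_nonneg (norm_nonneg ζ) (norm_nonneg k),
              mul_nonneg (norm_nonneg k) (norm_nonneg k), sq_nonneg (1+‖k‖),
              mul_nonneg (mul_nonneg (norm_nonneg ζ) (norm_nonneg ζ)) (sq_nonneg (1+‖k‖))]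
    calc ‖((‖k‖^2:ℝ):ℂ) + ζ‖ ^ ((1:ℝ)/2)
        ≤ (((1 + ‖ζ‖) * (1 + ‖k‖))^2) ^ ((1:ℝ)/2) :=
          Real.rpow_le_rpow (norm_nonneg _) h1 (by norm_num)
      _ = (1 + ‖ζ‖) * (1 + ‖k‖) := by
          rw [← Real.rpow_natCast ((1 + ‖ζ‖) * (1 + ‖k‖)) 2, ← Real.rpow_mul
            (by positivity)]
          norm_num
  refine ⟨Nat.factorial n * (Amax * (1 + ‖ζ‖)) * 2^n, by positivity, fun k => ?_⟩
  have hcomp : (fun k : Kspace => (((‖k‖^2:ℝ):ℂ) + ζ) ^ ((1:ℂ)/2 - (m:ℕ)))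
      = (fun w : ℂ => w ^ ((1:ℂ)/2 - (m:ℕ))) ∘ (fun k : Kspace => (((‖k‖^2:ℝ):ℂ) + ζ)) := rfl
  rw [hcomp, ← iteratedFDerivWithin_univ]
  have key := norm_iteratedFDerivWithin_comp_le (𝕜 := ℝ) (n := n)
    (contDiffOn_cpow_slit ((1:ℂ)/2 - (m:ℕ))) ((q_smooth ζ).contDiffOn) le_top
    Complex.isOpen_slitPlane.uniqueDiffOn uniqueDiffOn_univ
    (fun x _ => slit_mem hζ _ (by positivity)) (Set.mem_univ k)
    (C := Amax * (1 + ‖ζ‖) * (1 + ‖k‖)) (D := 2 * (1 + ‖k‖)) ?_ ?_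
  · calc ‖iteratedFDerivWithin ℝ n ((fun w : ℂ => w ^ ((1:ℂ)/2 - (m:ℕ))) ∘ _) Set.univ k‖
        ≤ (n.factorial : ℝ) * (Amax * (1 + ‖ζ‖) * (1 + ‖k‖)) * (2 * (1 + ‖k‖))^n :=
          key
      _ = Nat.factorial n * (Amax * (1 + ‖ζ‖)) * 2^n * (1+‖k‖)^(n+1) := by
          rw [mul_pow]; ring
  · intro i hi
    have hq : δ ≤ ‖((‖k‖^2:ℝ):ℂ) + ζ‖ := hδq _ (by positivity)
    calc ‖iteratedFDerivWithin ℝ i (fun w : ℂ => w ^ ((1:ℂ)/2 - (m:ℕ)))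
          Complex.slitPlane (((‖k‖^2:ℝ):ℂ) + ζ)‖
        ≤ A i * ‖((‖k‖^2:ℝ):ℂ) + ζ‖ ^ ((1:ℝ)/2) :=
          hA i _ (slit_mem hζ _ (by positivity)) hq
      _ ≤ Amax * ((1 + ‖ζ‖) * (1 + ‖k‖)) := by
          apply mul_le_mul (hAi' i hi) (habsq k) (by positivity) hAmax0
      _ = Amax * (1 + ‖ζ‖) * (1 + ‖k‖) := by ring
  · intro i hi1 hin
    rw [iteratedFDerivWithin_univ]
    exact q_iFD_bound ζ i hi1 k

set_option maxHeartbeats 2000000 in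
lemma phi_re_bound (ζ : ℂ) (hζ : ∀ x : ℝ, x ≤ 0 → ζ ≠ (x : ℂ))
    (z : Fin 4 → ℂ)
    (hz : Real.sqrt ((z 1).im ^ 2 + (z 2).im ^ 2 + (z 3).im ^ 2) < -(z 0).im) :
    ∃ c C₀ : ℝ, 0 < c ∧ ∀ k : Kspace,
      (-Complex.I * ((((‖k‖^2:ℝ):ℂ) + ζ) ^ ((1:ℂ)/2)) * z 0 +
        Complex.I * ((k 0 : ℂ) * z 1 + (k 1 : ℂ) * z 2 + (k 2 : ℂ) * z 3)).re
      ≤ C₀ - c * ‖k‖ := by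
  obtain ⟨δ, hδ, hδq⟩ := delta_bound hζ
  set a : ℝ := -(z 0).im with ha
  set η : Kspace := (WithLp.equiv 2 (Fin 3 → ℝ)).symm ![(z 1).im, (z 2).im, (z 3).im] with hη
  have hηnorm : ‖η‖ = Real.sqrt ((z 1).im ^ 2 + (z 2).im ^ 2 + (z 3).im ^ 2) := by
    rw [EuclideanSpace.norm_eq]
    congr 1
    rw [Fin.sum_univ_three]
    simp [hη, WithLp.equiv_symm_apply, Real.norm_eq_abs, sq_abs]
  have hηa : ‖η‖ < a := by rw [hηnorm]; exact hz
  have ha0 : 0 < a := lt_of_le_of_lt (norm_nonneg η) hηa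
  set c₁ : ℝ := Real.sqrt (max 0 (-ζ.re)) with hc₁
  have hc₁0 : 0 ≤ c₁ := Real.sqrt_nonneg _
  set Bim : ℝ := ζ.im^2/(2*δ) + 2*‖ζ‖ with hBim
  have hBim0 : 0 ≤ Bim := by positivity
  set b : ℝ := Real.sqrt Bim with hb
  refine ⟨a - ‖η‖, b * |(z 0).re| + a * c₁, by linarith, fun k => ?_⟩
  set w : ℂ := ((‖k‖^2:ℝ):ℂ) + ζ with hw
  have hwU : w ∈ Complex.slitPlane := slit_mem hζ _ (by positivity)
  have hw0 : w ≠ 0 := Complex.slitPlane_ne_zero hwU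
  have hwre : w.re = ‖k‖^2 + ζ.re := by
    rw [hw, Complex.add_re, Complex.ofReal_re]
  have hwim : w.im = ζ.im := by
    rw [hw, Complex.add_im, Complex.ofReal_im, zero_add]
  have hδw : δ ≤ ‖w‖ := hδq _ (by positivity)
  have habsw : ‖w‖ ≤ ‖k‖^2 + ‖ζ‖ := by
    calc ‖w‖ ≤ ‖((‖k‖^2:ℝ):ℂ)‖ + ‖ζ‖ := norm_add_le _ _
      _ = ‖k‖^2 + ‖ζ‖ := by
          rw [Complex.norm_real, Real.norm_eq_abs, _root_.abs_of_nonneg (by positivity : (0:ℝ) ≤ ‖k‖^2)]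
  set E : ℂ := w ^ ((1:ℂ)/2) with hE
  have hre0 : 0 ≤ E.re := sqrt_re_nonneg hwU
  have hresq : E.re^2 = (‖w‖ + w.re)/2 := sqrt_re_sq hw0
  have himsq : E.im^2 = (‖w‖ - w.re)/2 := sqrt_im_sq hw0
  have hrelw : w.re ≤ ‖w‖ := Complex.re_le_norm w
  -- lower bound on E.re
  have hE_low : ‖k‖ - c₁ ≤ E.re := by
    rcases le_or_gt ‖k‖ c₁ with h | h
    · linarith
    · have hc₁sq : c₁^2 = max 0 (-ζ.re) := Real.sq_sqrt (le_max_left _ _)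
      have h1 : ‖k‖^2 - c₁^2 ≤ w.re := by
        rw [hwre, hc₁sq]
        have : -ζ.re ≤ max 0 (-ζ.re) := le_max_right _ _
        linarith
      have h2 : (‖k‖ - c₁)^2 ≤ E.re^2 := by nlinarith
      nlinarith [sq_nonneg (E.re + (‖k‖ - c₁))]
  -- upper bound on |E.im|
  have hIm2 : E.im^2 ≤ Bim := by
    rcases le_or_gt 0 w.re with h | h
    · have hprod : (‖w‖ - w.re) * (‖w‖ + w.re) = ζ.im^2 := by
        have h1 : ‖w‖ ^ 2 = w.re^2 + w.im^2 := by
          rw [Complex.sq_norm, Complex.normSq_apply]; ring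
        rw [← hwim]; nlinarith [h1]
      have h2 : δ * (‖w‖ - w.re) ≤ ζ.im^2 := by
        nlinarith [hδw, hrelw]
      have h3 : ‖w‖ - w.re ≤ ζ.im^2 / δ := by
        rw [le_div_iff₀ hδ]; linarith [h2]
      rw [himsq, hBim]
      have : ζ.im^2/(2*δ) = (ζ.im^2/δ)/2 := by ring
      rw [this]
      have habsζ : (0:ℝ) ≤ ‖ζ‖ := norm_nonneg ζ
      linarith
    · have hk2 : ‖k‖^2 < -ζ.re := by rw [hwre] at h; linarith
      have hζre : -ζ.re ≤ ‖ζ‖ := by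
        calc -ζ.re ≤ |ζ.re| := neg_le_abs _
          _ ≤ ‖ζ‖ := Complex.abs_re_le_norm ζ
      have habsw2 : ‖w‖ ≤ 2 * ‖ζ‖ := by
        calc ‖w‖ ≤ ‖k‖^2 + ‖ζ‖ := habsw
          _ ≤ 2 * ‖ζ‖ := by linarith
      have hwre_low : -(‖w‖) ≤ w.re := by
        have h1 := neg_abs_le w.re
        have h2 := Complex.abs_re_le_norm w
        linarith
      rw [himsq, hBim]
      have : (0:ℝ) ≤ ζ.im^2/(2*δ) := by positivity
      linarith
  have hb2 : |E.im| ≤ b := by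
    rw [hb, ← Real.sqrt_sq_eq_abs]
    exact Real.sqrt_le_sqrt hIm2
  -- Cauchy-Schwarz
  have hinner : (inner ℝ k η : ℝ) = k 0 * (z 1).im + k 1 * (z 2).im + k 2 * (z 3).im := by
    rw [PiLp.inner_apply, Fin.sum_univ_three]
    simp [hη, WithLp.equiv_symm_apply, RCLike.inner_apply, conj_trivial, mul_comm]
  have hCS : |k 0 * (z 1).im + k 1 * (z 2).im + k 2 * (z 3).im| ≤ ‖k‖ * ‖η‖ := by
    rw [← hinner]
    exact abs_real_inner_le_norm k η
  -- compute the real part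
  have hrecomp : (-Complex.I * E * z 0 +
        Complex.I * ((k 0 : ℂ) * z 1 + (k 1 : ℂ) * z 2 + (k 2 : ℂ) * z 3)).re
      = E.im * (z 0).re + E.re * (z 0).im
        - (k 0 * (z 1).im + k 1 * (z 2).im + k 2 * (z 3).im) := by
    simp [Complex.add_re, Complex.mul_re, Complex.mul_im, Complex.I_re, Complex.I_im,
      Complex.neg_re, Complex.neg_im, Complex.ofReal_re, Complex.ofReal_im, Complex.add_im]
    ring
  rw [hrecomp]
  have h1 : E.im * (z 0).re ≤ b * |(z 0).re| := by
    calc E.im * (z 0).re ≤ |E.im * (z 0).re| := le_abs_self _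
      _ = |E.im| * |(z 0).re| := abs_mul _ _
      _ ≤ b * |(z 0).re| := mul_le_mul_of_nonneg_right hb2 (abs_nonneg _)
  have h2 : E.re * (z 0).im ≤ -a * (‖k‖ - c₁) := by
    have hz0 : (z 0).im = -a := by rw [ha]; ring
    rw [hz0]
    have := mul_le_mul_of_nonneg_left hE_low (le_of_lt ha0)
    nlinarith
  have h3 : -(k 0 * (z 1).im + k 1 * (z 2).im + k 2 * (z 3).im) ≤ ‖k‖ * ‖η‖ := by
    calc -(k 0 * (z 1).im + k 1 * (z 2).im + k 2 * (z 3).im)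
        ≤ |k 0 * (z 1).im + k 1 * (z 2).im + k 2 * (z 3).im| := neg_le_abs _
      _ ≤ ‖k‖ * ‖η‖ := hCS
  nlinarith [norm_nonneg k, norm_nonneg η]

/-- Principal branch of `√(‖k‖² + ζ)` for `k ∈ ℝ³`. -/
noncomputable def Esqrt (ζ : ℂ) (k : EuclideanSpace ℝ (Fin 3)) : ℂ :=
  ((‖k‖ ^ 2 : ℝ) + ζ) ^ ((1 : ℂ) / 2)

/-- For `ζ ∈ ℂ ∖ (−∞,0]` and `z` in the forward tube
`T = {z ∈ ℂ⁴ : −Im z₀ > √((Im z₁)² + (Im z₂)² + (Im z₃)²)}`, the function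
`k ↦ (2E_ζ(k))⁻¹ exp(−iE_ζ(k)z₀ + i(k₁z₁ + k₂z₂ + k₃z₃))` on `ℝ³` is a Schwartz function. -/
theorem tube_integrand_schwartz (ζ : ℂ) (hζ : ∀ x : ℝ, x ≤ 0 → ζ ≠ (x : ℂ))
    (z : Fin 4 → ℂ)
    (hz : Real.sqrt ((z 1).im ^ 2 + (z 2).im ^ 2 + (z 3).im ^ 2) < -(z 0).im) :
    ∃ g : SchwartzMap (EuclideanSpace ℝ (Fin 3)) ℂ,
      ∀ k : EuclideanSpace ℝ (Fin 3),
        g k = (2 * Esqrt ζ k)⁻¹ *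
          Complex.exp (-Complex.I * Esqrt ζ k * z 0 +
            Complex.I * ((k 0 : ℂ) * z 1 + (k 1 : ℂ) * z 2 + (k 2 : ℂ) * z 3)) := by
  classical
  -- the basic functions
  set Ek : Kspace → ℂ := fun k => (((‖k‖^2:ℝ):ℂ) + ζ) ^ ((1:ℂ)/2) with hEk
  set φ : Kspace → ℂ := fun k => -Complex.I * Ek k * z 0 +
      Complex.I * ((k 0 : ℂ) * z 1 + (k 1 : ℂ) * z 2 + (k 2 : ℂ) * z 3) with hφ
  set finv : Kspace → ℂ := fun k => (2 * Ek k)⁻¹ with hfinv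
  set f : Kspace → ℂ := fun k => finv k * Complex.exp (φ k) with hf
  -- smoothness and bounds for Ek
  have hcast0 : ((1:ℂ)/2 - ((0:ℕ):ℂ)) = (1:ℂ)/2 := by norm_num
  have hE_sm : ContDiff ℝ ⊤ Ek := by
    have := Em_smooth ζ hζ 0
    rw [hcast0] at this
    exact this
  have hE_bd : ∀ n : ℕ, ∃ C, 0 ≤ C ∧ ∀ k : Kspace,
      ‖iteratedFDeriv ℝ n Ek k‖ ≤ C * (1+‖k‖)^(n+1) := by
    intro n
    have := Em_bound ζ hζ 0 n
    rw [hcast0] at this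
    exact this
  -- the linear part
  set l : Kspace →L[ℝ] ℂ :=
    ((EuclideanSpace.proj (0:Fin 3)).smulRight (Complex.I * z 1)) +
    ((EuclideanSpace.proj (1:Fin 3)).smulRight (Complex.I * z 2)) +
    ((EuclideanSpace.proj (2:Fin 3)).smulRight (Complex.I * z 3)) with hl
  have hφ_eq : φ = fun k => (-Complex.I * z 0) • Ek k + l k := by
    funext k
    simp only [hφ, hl, ContinuousLinearMap.add_apply, ContinuousLinearMap.smulRight_apply,
      PiLp.proj_apply, smul_eq_mul, Complex.real_smul]
    ring
  have hφ_sm : ContDiff ℝ ⊤ φ := by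
    rw [hφ_eq]
    exact (hE_sm.const_smul _).add l.contDiff
  -- derivative bounds for φ
  have hφ_bd : ∀ n : ℕ, ∃ Kn : ℝ, 1 ≤ Kn ∧ ∀ (k : Kspace) (i : ℕ), 1 ≤ i → i ≤ n →
      ‖iteratedFDeriv ℝ i φ k‖ ≤ (Kn * (1+‖k‖)^(n+1))^i := by
    intro n
    choose CE hCE0 hCE using hE_bd
    obtain ⟨CEm, hCEm⟩ := exists_forall_le CE n
    set CEmax := max CEm 0 with hCEmax
    have hCEmax0 : 0 ≤ CEmax := le_max_right _ _
    have hCE' : ∀ i ≤ n, CE i ≤ CEmax := fun i hi => le_trans (hCEm i hi) (le_max_left _ _)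
    set Kn := max 1 (‖-Complex.I * z 0‖ * CEmax + ‖l‖) with hKn
    have hKn1 : (1:ℝ) ≤ Kn := le_max_left _ _
    refine ⟨Kn, hKn1, fun k i hi1 hin => ?_⟩
    have hbase : (1:ℝ) ≤ 1 + ‖k‖ := by linarith [norm_nonneg k]
    have hD1 : (1:ℝ) ≤ Kn * (1+‖k‖)^(n+1) := by
      calc (1:ℝ) = 1 * 1 := (one_mul 1).symm
        _ ≤ Kn * (1+‖k‖)^(n+1) := by
            apply mul_le_mul hKn1 (one_le_pow₀ hbase) zero_le_one (by linarith)
    have hstep : ‖iteratedFDeriv ℝ i φ k‖ ≤ Kn * (1+‖k‖)^(n+1) := by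
      rw [hφ_eq]
      have h1 : ContDiff ℝ (i:ℕ∞) (fun k => (-Complex.I * z 0) • Ek k) :=
        (hE_sm.const_smul _).of_le le_top
      have h2 : ContDiff ℝ (i:ℕ∞) (fun k : Kspace => l k) := l.contDiff
      have hsplitfun : (fun k => (-Complex.I * z 0) • Ek k + l k)
          = (fun k => (-Complex.I * z 0) • Ek k) + (fun k : Kspace => l k) := rfl
      rw [hsplitfun, iteratedFDeriv_add_apply h1.contDiffAt h2.contDiffAt]
      have hs : ‖iteratedFDeriv ℝ i (fun k => (-Complex.I * z 0) • Ek k) k‖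
          ≤ ‖-Complex.I * z 0‖ * CEmax * (1+‖k‖)^(n+1) := by
        have hsm2 : (fun k => (-Complex.I * z 0) • Ek k) = (-Complex.I * z 0) • Ek := rfl
        have : iteratedFDeriv ℝ i ((-Complex.I * z 0) • Ek) k
            = (-Complex.I * z 0) • iteratedFDeriv ℝ i Ek k :=
          iteratedFDeriv_const_smul_apply (hE_sm.of_le le_top).contDiffAt
        rw [hsm2, this, norm_smul]
        calc ‖-Complex.I * z 0‖ * ‖iteratedFDeriv ℝ i Ek k‖
            ≤ ‖-Complex.I * z 0‖ * (CE i * (1+‖k‖)^(i+1)) :=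
              mul_le_mul_of_nonneg_left (hCE i k) (norm_nonneg _)
          _ ≤ ‖-Complex.I * z 0‖ * (CEmax * (1+‖k‖)^(n+1)) := by
              apply mul_le_mul_of_nonneg_left ?_ (norm_nonneg _)
              apply mul_le_mul (hCE' i hin) ?_ (by positivity) hCEmax0
              exact pow_le_pow_right₀ hbase (by omega)
          _ = ‖-Complex.I * z 0‖ * CEmax * (1+‖k‖)^(n+1) := by ring
      have hlb : ‖iteratedFDeriv ℝ i (fun k : Kspace => l k) k‖ ≤ ‖l‖ * (1+‖k‖)^(n+1) := by
        calc ‖iteratedFDeriv ℝ i (fun k : Kspace => l k) k‖ ≤ ‖l‖ := clm_iFD_le l i hi1 k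
          _ ≤ ‖l‖ * (1+‖k‖)^(n+1) := by
              nlinarith [norm_nonneg l, one_le_pow₀ hbase (n := n+1)]
      calc ‖iteratedFDeriv ℝ i (fun k => (-Complex.I * z 0) • Ek k) k
              + iteratedFDeriv ℝ i (fun k : Kspace => l k) k‖
          ≤ ‖iteratedFDeriv ℝ i (fun k => (-Complex.I * z 0) • Ek k) k‖
              + ‖iteratedFDeriv ℝ i (fun k : Kspace => l k) k‖ := norm_add_le _ _
        _ ≤ ‖-Complex.I * z 0‖ * CEmax * (1+‖k‖)^(n+1) + ‖l‖ * (1+‖k‖)^(n+1) := by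
            linarith
        _ = (‖-Complex.I * z 0‖ * CEmax + ‖l‖) * (1+‖k‖)^(n+1) := by ring
        _ ≤ Kn * (1+‖k‖)^(n+1) := by
            apply mul_le_mul_of_nonneg_right (le_max_right _ _) (by positivity)
    calc ‖iteratedFDeriv ℝ i φ k‖ ≤ Kn * (1+‖k‖)^(n+1) := hstep
      _ ≤ (Kn * (1+‖k‖)^(n+1))^i := le_self_pow₀ hD1 (by omega)
  -- the real-part bound
  obtain ⟨c, C₀, hc, hφre⟩ := phi_re_bound ζ hζ z hz
  have hφre' : ∀ k : Kspace, (φ k).re ≤ C₀ - c * ‖k‖ := fun k => hφre k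
  -- bounds for the exponential factor
  have hexp_sm : ContDiff ℝ ⊤ (fun k => Complex.exp (φ k)) :=
    (Complex.contDiff_exp (𝕜 := ℝ)).comp hφ_sm
  have hexp_bd : ∀ n : ℕ, ∃ C, 0 ≤ C ∧ ∀ k : Kspace,
      ‖iteratedFDeriv ℝ n (fun k => Complex.exp (φ k)) k‖
        ≤ C * (1+‖k‖)^((n+1)*n) * Real.exp (C₀ - c * ‖k‖) := by
    intro n
    obtain ⟨Kn, hKn1, hKn⟩ := hφ_bd n
    refine ⟨Nat.factorial n * Kn^n, by positivity, fun k => ?_⟩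
    have key := norm_iteratedFDeriv_comp_le (𝕜 := ℝ) (n := n)
      (Complex.contDiff_exp (𝕜 := ℝ) (n := ⊤)) hφ_sm le_top k
      (C := Real.exp (C₀ - c * ‖k‖)) (D := Kn * (1+‖k‖)^(n+1)) ?_ ?_
    · calc ‖iteratedFDeriv ℝ n (fun k => Complex.exp (φ k)) k‖
          = ‖iteratedFDeriv ℝ n (Complex.exp ∘ φ) k‖ := rfl
        _ ≤ (n.factorial : ℝ) * Real.exp (C₀ - c * ‖k‖) * (Kn * (1+‖k‖)^(n+1))^n := key
        _ = Nat.factorial n * Kn^n * (1+‖k‖)^((n+1)*n) * Real.exp (C₀ - c * ‖k‖) := by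
            rw [mul_pow, pow_mul]; ring
    · intro i _
      calc ‖iteratedFDeriv ℝ i Complex.exp (φ k)‖ ≤ Real.exp ((φ k).re) :=
            exp_iter_bound i (φ k)
        _ ≤ Real.exp (C₀ - c * ‖k‖) := Real.exp_le_exp.mpr (hφre' k)
    · intro i hi1 hin
      exact hKn k i hi1 hin
  -- bounds for the inverse factor
  have hcast1 : ((1:ℂ)/2 - ((1:ℕ):ℂ)) = -((1:ℂ)/2) := by norm_num
  have hfinv_eq : finv = fun k => ((2:ℂ))⁻¹ •
      ((((‖k‖^2:ℝ):ℂ) + ζ) ^ ((1:ℂ)/2 - ((1:ℕ):ℂ))) := by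
    funext k
    rw [hfinv, hcast1]
    simp only [smul_eq_mul]
    rw [Complex.cpow_neg, mul_inv]
  have hfinv_sm : ContDiff ℝ ⊤ finv := by
    rw [hfinv_eq]
    exact (Em_smooth ζ hζ 1).const_smul _
  have hfinv_bd : ∀ n : ℕ, ∃ C, 0 ≤ C ∧ ∀ k : Kspace,
      ‖iteratedFDeriv ℝ n finv k‖ ≤ C * (1+‖k‖)^(n+1) := by
    intro n
    obtain ⟨C, hC0, hC⟩ := Em_bound ζ hζ 1 n
    refine ⟨‖((2:ℂ))⁻¹‖ * C, by positivity, fun k => ?_⟩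
    rw [hfinv_eq]
    have hsm : (fun k : Kspace => ((2:ℂ))⁻¹ •
        ((((‖k‖^2:ℝ):ℂ) + ζ) ^ ((1:ℂ)/2 - ((1:ℕ):ℂ))))
        = ((2:ℂ))⁻¹ • (fun k : Kspace => (((‖k‖^2:ℝ):ℂ) + ζ) ^ ((1:ℂ)/2 - ((1:ℕ):ℂ))) := rfl
    have : iteratedFDeriv ℝ n (((2:ℂ))⁻¹ •
        (fun k : Kspace => (((‖k‖^2:ℝ):ℂ) + ζ) ^ ((1:ℂ)/2 - ((1:ℕ):ℂ)))) k
        = ((2:ℂ))⁻¹ • iteratedFDeriv ℝ n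
            (fun k : Kspace => (((‖k‖^2:ℝ):ℂ) + ζ) ^ ((1:ℂ)/2 - ((1:ℕ):ℂ))) k :=
      iteratedFDeriv_const_smul_apply ((Em_smooth ζ hζ 1).of_le le_top).contDiffAt
    rw [hsm, this, norm_smul, mul_assoc]
    exact mul_le_mul_of_nonneg_left (hC k) (norm_nonneg _)
  -- smoothness of f
  have hf_sm : ContDiff ℝ ⊤ f := hfinv_sm.mul hexp_sm
  -- the decay estimates
  have hdecay : ∀ p n : ℕ, ∃ C : ℝ, ∀ x : Kspace,
      ‖x‖^p * ‖iteratedFDeriv ℝ n f x‖ ≤ C := by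
    intro p n
    choose CI hCI0 hCI using hfinv_bd
    choose CX hCX0 hCX using hexp_bd
    obtain ⟨CIm, hCIm⟩ := exists_forall_le CI n
    obtain ⟨CXm, hCXm⟩ := exists_forall_le CX n
    set CI' := max CIm 0 with hCI'
    set CX' := max CXm 0 with hCX'
    have hCI'0 : 0 ≤ CI' := le_max_right _ _
    have hCX'0 : 0 ≤ CX' := le_max_right _ _
    have hCIle : ∀ i ≤ n, CI i ≤ CI' := fun i hi => le_trans (hCIm i hi) (le_max_left _ _)
    have hCXle : ∀ i ≤ n, CX i ≤ CX' := fun i hi => le_trans (hCXm i hi) (le_max_left _ _)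
    set M := p + (n+1) + (n+1)*n with hM
    obtain ⟨Cp, hCp⟩ := poly_exp_bound M c C₀ hc
    refine ⟨2^n * (CI' * CX') * max Cp 0, fun x => ?_⟩
    have hbase : (1:ℝ) ≤ 1 + ‖x‖ := by linarith [norm_nonneg x]
    have hterm : ∀ i ∈ Finset.range (n+1),
        (n.choose i : ℝ) * ‖iteratedFDeriv ℝ i finv x‖ *
          ‖iteratedFDeriv ℝ (n-i) (fun k => Complex.exp (φ k)) x‖
        ≤ (n.choose i : ℝ) * ((CI' * CX') * (1+‖x‖)^((n+1) + (n+1)*n)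
            * Real.exp (C₀ - c * ‖x‖)) := by
      intro i hi
      have hin : i ≤ n := Nat.lt_succ_iff.mp (Finset.mem_range.mp hi)
      have h1 : ‖iteratedFDeriv ℝ i finv x‖ ≤ CI' * (1+‖x‖)^(n+1) := by
        calc ‖iteratedFDeriv ℝ i finv x‖ ≤ CI i * (1+‖x‖)^(i+1) := hCI i x
          _ ≤ CI' * (1+‖x‖)^(n+1) := by
              apply mul_le_mul (hCIle i hin) (pow_le_pow_right₀ hbase (by omega))
                (by positivity) hCI'0
      have h2 : ‖iteratedFDeriv ℝ (n-i) (fun k => Complex.exp (φ k)) x‖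
          ≤ CX' * (1+‖x‖)^((n+1)*n) * Real.exp (C₀ - c * ‖x‖) := by
        calc ‖iteratedFDeriv ℝ (n-i) (fun k => Complex.exp (φ k)) x‖
            ≤ CX (n-i) * (1+‖x‖)^((n-i+1)*(n-i)) * Real.exp (C₀ - c * ‖x‖) := hCX (n-i) x
          _ ≤ CX' * (1+‖x‖)^((n+1)*n) * Real.exp (C₀ - c * ‖x‖) := by
              apply mul_le_mul_of_nonneg_right ?_ (Real.exp_pos _).le
              apply mul_le_mul (hCXle (n-i) (by omega))
                (pow_le_pow_right₀ hbase (by nlinarith [Nat.sub_le n i])) (by positivity) hCX'0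
      calc (n.choose i : ℝ) * ‖iteratedFDeriv ℝ i finv x‖ *
            ‖iteratedFDeriv ℝ (n-i) (fun k => Complex.exp (φ k)) x‖
          ≤ (n.choose i : ℝ) * (CI' * (1+‖x‖)^(n+1)) *
            (CX' * (1+‖x‖)^((n+1)*n) * Real.exp (C₀ - c * ‖x‖)) := by
            apply mul_le_mul ?_ h2 (norm_nonneg _) (by positivity)
            exact mul_le_mul_of_nonneg_left h1 (Nat.cast_nonneg _)
        _ = (n.choose i : ℝ) * ((CI' * CX') * (1+‖x‖)^((n+1) + (n+1)*n)
            * Real.exp (C₀ - c * ‖x‖)) := by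
            rw [pow_add]; ring
    have hmul := norm_iteratedFDeriv_mul_le (𝕜 := ℝ) hfinv_sm hexp_sm x (le_top (a := (n : WithTop ℕ∞)))
    have hsum : ‖iteratedFDeriv ℝ n f x‖
        ≤ 2^n * ((CI' * CX') * (1+‖x‖)^((n+1) + (n+1)*n) * Real.exp (C₀ - c * ‖x‖)) := by
      calc ‖iteratedFDeriv ℝ n f x‖
          ≤ ∑ i ∈ Finset.range (n+1), (n.choose i : ℝ) * ‖iteratedFDeriv ℝ i finv x‖ *
            ‖iteratedFDeriv ℝ (n-i) (fun k => Complex.exp (φ k)) x‖ := hmul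
        _ ≤ ∑ i ∈ Finset.range (n+1), (n.choose i : ℝ) *
            ((CI' * CX') * (1+‖x‖)^((n+1) + (n+1)*n) * Real.exp (C₀ - c * ‖x‖)) :=
            Finset.sum_le_sum hterm
        _ = (∑ i ∈ Finset.range (n+1), (n.choose i : ℝ)) *
            ((CI' * CX') * (1+‖x‖)^((n+1) + (n+1)*n) * Real.exp (C₀ - c * ‖x‖)) := by
            rw [← Finset.sum_mul]
        _ = 2^n * ((CI' * CX') * (1+‖x‖)^((n+1) + (n+1)*n) * Real.exp (C₀ - c * ‖x‖)) := by
            norm_num [← Nat.cast_sum, Nat.sum_range_choose]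
    calc ‖x‖^p * ‖iteratedFDeriv ℝ n f x‖
        ≤ (1+‖x‖)^p * (2^n * ((CI' * CX') * (1+‖x‖)^((n+1) + (n+1)*n)
            * Real.exp (C₀ - c * ‖x‖))) := by
          apply mul_le_mul (pow_le_pow_left₀ (norm_nonneg x) (by linarith) p) hsum
            (norm_nonneg _) (by positivity)
      _ = 2^n * (CI' * CX') * ((1+‖x‖)^M * Real.exp (C₀ - c * ‖x‖)) := by
          rw [hM, pow_add, pow_add]; ring
      _ ≤ 2^n * (CI' * CX') * max Cp 0 := by
          apply mul_le_mul_of_nonneg_left ?_ (by positivity)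
          exact le_trans (hCp ‖x‖ (norm_nonneg x)) (le_max_left _ _)
  -- assemble the Schwartz function
  refine ⟨⟨f, hf_sm.of_le le_top, hdecay⟩, fun k => rfl⟩
end

section
/- Let ζ ∈ ℂ with Im ζ > 0 and Z ∈ ℂ. Define F : T → ℂ by F(z) := (2π)⁻³ ∫_{ℝ³} [ Z · (2 E_ζ(k))⁻¹ · exp(−i E_ζ(k) z₀ + i(k₁z₁ + k₂z₂ + k₃z₃)) + conj(Z) · (2 · conj(E_ζ(k)))⁻¹ · exp(−i · conj(E_ζ(k)) · z₀ + i(k₁z₁ + k₂z₂ + k₃z₃)) ] dk. Then for every z ∈ T the integrand is integrable over k ∈ ℝ³, and F is holomorphic on T (ℂ-differentiable as a function of the four complex variables at every point of the open set T). -/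
set_option maxHeartbeats 1000000

open MeasureTheory Complex

/-- The forward tube `T = {z ∈ ℂ⁴ : −Im z₀ > √((Im z₁)² + (Im z₂)² + (Im z₃)²)}`. -/
def ForwardTube : Set (Fin 4 → ℂ) :=
  {z | Real.sqrt ((z 1).im ^ 2 + (z 2).im ^ 2 + (z 3).im ^ 2) < -(z 0).im}

/-- The integrand of the holomorphic Wightman function of one pair of
complex-conjugate simple poles. -/
noncomputable def cpIntegrand (ζ Z : ℂ) (z : Fin 4 → ℂ) (k : EuclideanSpace ℝ (Fin 3)) : ℂ :=
  Z * (2 * Esqrt ζ k)⁻¹ *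
      Complex.exp (-Complex.I * Esqrt ζ k * z 0 +
        Complex.I * ((k 0 : ℂ) * z 1 + (k 1 : ℂ) * z 2 + (k 2 : ℂ) * z 3)) +
    (starRingEnd ℂ Z) * (2 * starRingEnd ℂ (Esqrt ζ k))⁻¹ *
      Complex.exp (-Complex.I * starRingEnd ℂ (Esqrt ζ k) * z 0 +
        Complex.I * ((k 0 : ℂ) * z 1 + (k 1 : ℂ) * z 2 + (k 2 : ℂ) * z 3))

/-- The holomorphic Wightman function of one pair of complex-conjugate simple poles. -/
noncomputable def cpWightman (ζ Z : ℂ) (z : Fin 4 → ℂ) : ℂ :=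
  ((2 * Real.pi : ℝ) : ℂ)⁻¹ ^ 3 * ∫ k : EuclideanSpace ℝ (Fin 3), cpIntegrand ζ Z z k

namespace CPAux

/-- One of the two terms of the integrand. -/
noncomputable def cpTerm (Zc c : ℂ) (z : Fin 4 → ℂ) (k : EuclideanSpace ℝ (Fin 3)) : ℂ :=
  Zc * (2 * c)⁻¹ *
    Complex.exp (-Complex.I * c * z 0 +
      Complex.I * ((k 0 : ℂ) * z 1 + (k 1 : ℂ) * z 2 + (k 2 : ℂ) * z 3))

lemma cpIntegrand_eq (ζ Z : ℂ) (z : Fin 4 → ℂ) (k : EuclideanSpace ℝ (Fin 3)) :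
    cpIntegrand ζ Z z k =
      cpTerm Z (Esqrt ζ k) z k + cpTerm (starRingEnd ℂ Z) (starRingEnd ℂ (Esqrt ζ k)) z k := rfl

variable {ζ : ℂ}

lemma base_ne (hζ : 0 < ζ.im) (k : EuclideanSpace ℝ (Fin 3)) :
    ((‖k‖ ^ 2 : ℝ) : ℂ) + ζ ≠ 0 := by
  intro h
  have := congrArg Complex.im h
  simp [← Complex.ofReal_pow] at this
  exact hζ.ne' this

lemma esqrt_mul_self (hζ : 0 < ζ.im) (k : EuclideanSpace ℝ (Fin 3)) :
    Esqrt ζ k * Esqrt ζ k = ((‖k‖ ^ 2 : ℝ) : ℂ) + ζ := by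
  rw [Esqrt, ← Complex.cpow_add _ _ (base_ne hζ k)]
  norm_num

lemma esqrt_pos (hζ : 0 < ζ.im) (k : EuclideanSpace ℝ (Fin 3)) :
    0 < (Esqrt ζ k).re ∧ 0 < (Esqrt ζ k).im := by
  set w : ℂ := ((‖k‖ ^ 2 : ℝ) : ℂ) + ζ with hw
  have hwim : w.im = ζ.im := by simp [hw, ← Complex.ofReal_pow]
  have hw0 : w ≠ 0 := base_ne hζ k
  have harg0 : 0 < w.arg := by
    rcases lt_or_eq_of_le (Complex.arg_nonneg_iff.mpr (by rw [hwim]; exact hζ.le)) with h | h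
    · exact h
    · exfalso
      have := (Complex.arg_eq_zero_iff.mp h.symm).2
      rw [hwim] at this
      exact hζ.ne' this
  have hargpi : w.arg < Real.pi := Complex.arg_lt_pi_iff.mpr (Or.inr (by rw [hwim]; exact hζ.ne'))
  have hE : Esqrt ζ k = Complex.exp (Complex.log w * ((1 : ℂ) / 2)) := by
    rw [Esqrt, Complex.cpow_def_of_ne_zero hw0]
  have him : (Complex.log w * ((1 : ℂ) / 2)).im = w.arg / 2 := by
    simp [Complex.mul_im, Complex.log_im]
    ring
  constructor
  · rw [hE, Complex.exp_re, him]
    have : 0 < Real.cos (w.arg / 2) :=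
      Real.cos_pos_of_mem_Ioo ⟨by nlinarith [Real.pi_pos], by linarith⟩
    positivity
  · rw [hE, Complex.exp_im, him]
    have : 0 < Real.sin (w.arg / 2) :=
      Real.sin_pos_of_pos_of_lt_pi (by linarith) (by nlinarith [Real.pi_pos])
    positivity

lemma esqrt_sq_re (hζ : 0 < ζ.im) (k : EuclideanSpace ℝ (Fin 3)) :
    (Esqrt ζ k).re * (Esqrt ζ k).re - (Esqrt ζ k).im * (Esqrt ζ k).im = ‖k‖ ^ 2 + ζ.re := by
  have := congrArg Complex.re (esqrt_mul_self hζ k)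
  simpa [Complex.mul_re, ← Complex.ofReal_pow] using this

lemma esqrt_sq_im (hζ : 0 < ζ.im) (k : EuclideanSpace ℝ (Fin 3)) :
    (Esqrt ζ k).re * (Esqrt ζ k).im + (Esqrt ζ k).im * (Esqrt ζ k).re = ζ.im := by
  have := congrArg Complex.im (esqrt_mul_self hζ k)
  simpa [Complex.mul_im, ← Complex.ofReal_pow] using this

lemma abs_esqrt_sq (hζ : 0 < ζ.im) (k : EuclideanSpace ℝ (Fin 3)) :
    (‖Esqrt ζ k‖) ^ 2 = ‖((‖k‖ ^ 2 : ℝ) : ℂ) + ζ‖ := by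
  rw [← esqrt_mul_self hζ k, norm_mul, sq]

lemma esqrt_re_ge (hζ : 0 < ζ.im) (k : EuclideanSpace ℝ (Fin 3)) :
    ‖k‖ - Real.sqrt (‖ζ‖) ≤ (Esqrt ζ k).re := by
  obtain ⟨ha, hb⟩ := esqrt_pos hζ k
  have hre := esqrt_sq_re hζ k
  set a := (Esqrt ζ k).re
  set b := (Esqrt ζ k).im
  set M := Real.sqrt (‖ζ‖) with hM
  have hM0 : 0 ≤ M := Real.sqrt_nonneg _
  have hM2 : M ^ 2 = ‖ζ‖ := Real.sq_sqrt (norm_nonneg _)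
  have hζre : -(‖ζ‖) ≤ ζ.re := by
    have := Complex.abs_re_le_norm ζ
    rw [abs_le] at this
    linarith [this.1]
  rcases le_or_gt ‖k‖ M with h | h
  · linarith
  · have hsq : (‖k‖ - M) ^ 2 ≤ a ^ 2 := by
      nlinarith [mul_le_mul_of_nonneg_left h.le hM0, mul_pos hb hb]
    nlinarith [hsq, ha, h, hM0]

lemma esqrt_im_le (hζ : 0 < ζ.im) (k : EuclideanSpace ℝ (Fin 3)) :
    (Esqrt ζ k).im ≤ Real.sqrt (2 * ‖ζ‖) := by
  obtain ⟨ha, hb⟩ := esqrt_pos hζ k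
  have hre := esqrt_sq_re hζ k
  have him := esqrt_sq_im hζ k
  set a := (Esqrt ζ k).re
  set b := (Esqrt ζ k).im
  set B := Real.sqrt (2 * ‖ζ‖) with hB
  have hB0 : 0 ≤ B := Real.sqrt_nonneg _
  have hB2 : B ^ 2 = 2 * ‖ζ‖ := Real.sq_sqrt (by positivity)
  have hζre : -(‖ζ‖) ≤ ζ.re := by
    have := Complex.abs_re_le_norm ζ
    rw [abs_le] at this
    linarith [this.1]
  have hζim : ζ.im ≤ ‖ζ‖ := by
    have := Complex.abs_im_le_norm ζ
    rw [abs_le] at this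
    linarith [this.2]
  have hk : (0 : ℝ) ≤ ‖k‖ ^ 2 := sq_nonneg _
  -- b ^ 2 ≤ 2 |ζ|
  have hb2 : b ^ 2 ≤ 2 * ‖ζ‖ := by
    rcases le_or_gt b a with h | h
    · nlinarith
    · nlinarith
  nlinarith [sq_nonneg (b - B)]

lemma sqrt_im_le_abs_esqrt (hζ : 0 < ζ.im) (k : EuclideanSpace ℝ (Fin 3)) :
    Real.sqrt ζ.im ≤ ‖Esqrt ζ k‖ := by
  have h1 : ζ.im ≤ (‖Esqrt ζ k‖) ^ 2 := by
    rw [abs_esqrt_sq hζ k]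
    calc ζ.im = (((‖k‖ ^ 2 : ℝ) : ℂ) + ζ).im := by simp [← Complex.ofReal_pow]
      _ ≤ |(((‖k‖ ^ 2 : ℝ) : ℂ) + ζ).im| := le_abs_self _
      _ ≤ ‖((‖k‖ ^ 2 : ℝ) : ℂ) + ζ‖ := Complex.abs_im_le_norm _
  calc Real.sqrt ζ.im ≤ Real.sqrt ((‖Esqrt ζ k‖) ^ 2) := Real.sqrt_le_sqrt h1
    _ = ‖Esqrt ζ k‖ := Real.sqrt_sq (norm_nonneg _)

lemma abs_esqrt_le (hζ : 0 < ζ.im) (k : EuclideanSpace ℝ (Fin 3)) :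
    ‖Esqrt ζ k‖ ≤ ‖k‖ + Real.sqrt (‖ζ‖) := by
  set M := Real.sqrt (‖ζ‖) with hM
  have hM0 : 0 ≤ M := Real.sqrt_nonneg _
  have hM2 : M ^ 2 = ‖ζ‖ := Real.sq_sqrt (norm_nonneg _)
  have h1 : (‖Esqrt ζ k‖) ^ 2 ≤ (‖k‖ + M) ^ 2 := by
    rw [abs_esqrt_sq hζ k]
    calc ‖((‖k‖ ^ 2 : ℝ) : ℂ) + ζ‖
        ≤ ‖((‖k‖ ^ 2 : ℝ) : ℂ)‖ + ‖ζ‖ := norm_add_le _ _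
      _ = ‖k‖ ^ 2 + ‖ζ‖ := by
          rw [show ((‖k‖ ^ 2 : ℝ) : ℂ) = ((‖k‖ : ℂ)) ^ 2 from by push_cast; ring, norm_pow,
            Complex.norm_real, Real.norm_eq_abs, abs_norm]
      _ ≤ (‖k‖ + M) ^ 2 := by nlinarith [norm_nonneg k]
  calc ‖Esqrt ζ k‖ = Real.sqrt ((‖Esqrt ζ k‖) ^ 2) :=
        (Real.sqrt_sq (norm_nonneg _)).symm
    _ ≤ Real.sqrt ((‖k‖ + M) ^ 2) := Real.sqrt_le_sqrt h1
    _ = ‖k‖ + M := Real.sqrt_sq (by positivity)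

lemma esqrt_ne_zero (hζ : 0 < ζ.im) (k : EuclideanSpace ℝ (Fin 3)) : Esqrt ζ k ≠ 0 := by
  intro h
  have := sqrt_im_le_abs_esqrt hζ k
  rw [h] at this
  simp at this
  nlinarith [Real.sqrt_pos.mpr hζ]


/-- Euclidean vector from three reals. -/
noncomputable def ev (p q s : ℝ) : EuclideanSpace ℝ (Fin 3) :=
  (WithLp.equiv 2 (Fin 3 → ℝ)).symm ![p, q, s]

lemma ev_norm (p q s : ℝ) : ‖ev p q s‖ = Real.sqrt (p ^ 2 + q ^ 2 + s ^ 2) := by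
  rw [EuclideanSpace.norm_eq]
  congr 1
  simp [ev, Fin.sum_univ_three, Real.norm_eq_abs, sq_abs]

lemma inner_ev (k : EuclideanSpace ℝ (Fin 3)) (p q s : ℝ) :
    (inner ℝ k (ev p q s) : ℝ) = k 0 * p + k 1 * q + k 2 * s := by
  simp [ev, PiLp.inner_apply, Fin.sum_univ_three, RCLike.inner_apply]
  ring

lemma cs_bound (k : EuclideanSpace ℝ (Fin 3)) (p q s : ℝ) :
    |k 0 * p + k 1 * q + k 2 * s| ≤ ‖k‖ * Real.sqrt (p ^ 2 + q ^ 2 + s ^ 2) := by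
  have h := abs_real_inner_le_norm k (ev p q s)
  rw [inner_ev, ev_norm] at h
  exact h

lemma sqrt_triangle {p q s p' q' s' δ : ℝ} (hδ : 0 ≤ δ)
    (h1 : |p - p'| ≤ δ) (h2 : |q - q'| ≤ δ) (h3 : |s - s'| ≤ δ) :
    Real.sqrt (p ^ 2 + q ^ 2 + s ^ 2) ≤ Real.sqrt (p' ^ 2 + q' ^ 2 + s' ^ 2) + 2 * δ := by
  have key : ‖ev p q s‖ ≤ ‖ev p' q' s'‖ + ‖ev p q s - ev p' q' s'‖ := by
    have := norm_add_le (ev p' q' s') (ev p q s - ev p' q' s')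
    simpa using this
  have hsub : ev p q s - ev p' q' s' = ev (p - p') (q - q') (s - s') := by
    ext i
    fin_cases i <;> simp [ev]
  rw [hsub, ev_norm, ev_norm, ev_norm] at key
  have hd : Real.sqrt ((p - p') ^ 2 + (q - q') ^ 2 + (s - s') ^ 2) ≤ 2 * δ := by
    have h4 : (p - p') ^ 2 + (q - q') ^ 2 + (s - s') ^ 2 ≤ (2 * δ) ^ 2 := by
      nlinarith [abs_nonneg (p - p'), _root_.sq_abs (p - p'), _root_.sq_abs (q - q'), _root_.sq_abs (s - s'),
        abs_nonneg (q - q'), abs_nonneg (s - s')]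
    calc Real.sqrt ((p - p') ^ 2 + (q - q') ^ 2 + (s - s') ^ 2)
        ≤ Real.sqrt ((2 * δ) ^ 2) := Real.sqrt_le_sqrt h4
      _ = 2 * δ := Real.sqrt_sq (by linarith)
  linarith

lemma coord_abs_le_norm (k : EuclideanSpace ℝ (Fin 3)) (i : Fin 3) : |k i| ≤ ‖k‖ := by
  fin_cases i
  · have := cs_bound k 1 0 0
    simpa using this
  · have := cs_bound k 0 1 0
    simpa using this
  · have := cs_bound k 0 0 1
    simpa using this


/-- The (complex-linear) exponent of one term, as a continuous linear map. -/
noncomputable def expLin (c : ℂ) (k : EuclideanSpace ℝ (Fin 3)) : (Fin 4 → ℂ) →L[ℂ] ℂ :=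
  (-Complex.I * c) • ContinuousLinearMap.proj 0 +
    (Complex.I * (k 0 : ℂ)) • ContinuousLinearMap.proj 1 +
    (Complex.I * (k 1 : ℂ)) • ContinuousLinearMap.proj 2 +
    (Complex.I * (k 2 : ℂ)) • ContinuousLinearMap.proj 3

lemma expLin_apply (c : ℂ) (k : EuclideanSpace ℝ (Fin 3)) (z : Fin 4 → ℂ) :
    expLin c k z = -Complex.I * c * z 0 +
      Complex.I * ((k 0 : ℂ) * z 1 + (k 1 : ℂ) * z 2 + (k 2 : ℂ) * z 3) := by
  simp [expLin]
  ring

lemma norm_expLin_le (c : ℂ) (k : EuclideanSpace ℝ (Fin 3)) :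
    ‖expLin c k‖ ≤ ‖c‖ + 3 * ‖k‖ := by
  refine ContinuousLinearMap.opNorm_le_bound _ (by positivity) fun z => ?_
  rw [expLin_apply]
  have hz : ∀ i : Fin 4, ‖z i‖ ≤ ‖z‖ := fun i => norm_le_pi_norm z i
  have hk : ∀ i : Fin 3, ‖((k i : ℝ) : ℂ)‖ ≤ ‖k‖ := fun i => by
    rw [Complex.norm_real, Real.norm_eq_abs]; exact coord_abs_le_norm k i
  have t1 : ‖-Complex.I * c * z 0‖ ≤ ‖c‖ * ‖z‖ := by
    rw [norm_mul, norm_mul, norm_neg, Complex.norm_I, one_mul]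
    exact mul_le_mul_of_nonneg_left (hz 0) (norm_nonneg c)
  have t2 : ‖(k 0 : ℂ) * z 1‖ ≤ ‖k‖ * ‖z‖ := by
    rw [norm_mul]; exact mul_le_mul (hk 0) (hz 1) (norm_nonneg _) (norm_nonneg _)
  have t3 : ‖(k 1 : ℂ) * z 2‖ ≤ ‖k‖ * ‖z‖ := by
    rw [norm_mul]; exact mul_le_mul (hk 1) (hz 2) (norm_nonneg _) (norm_nonneg _)
  have t4 : ‖(k 2 : ℂ) * z 3‖ ≤ ‖k‖ * ‖z‖ := by
    rw [norm_mul]; exact mul_le_mul (hk 2) (hz 3) (norm_nonneg _) (norm_nonneg _)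
  have t5 : ‖Complex.I * ((k 0 : ℂ) * z 1 + (k 1 : ℂ) * z 2 + (k 2 : ℂ) * z 3)‖
      = ‖(k 0 : ℂ) * z 1 + (k 1 : ℂ) * z 2 + (k 2 : ℂ) * z 3‖ := by
    rw [norm_mul, Complex.norm_I, one_mul]
  have t6 : ‖(k 0 : ℂ) * z 1 + (k 1 : ℂ) * z 2 + (k 2 : ℂ) * z 3‖
      ≤ ‖k‖ * ‖z‖ + ‖k‖ * ‖z‖ + ‖k‖ * ‖z‖ := by
    have h1 := norm_add_le ((k 0 : ℂ) * z 1 + (k 1 : ℂ) * z 2) ((k 2 : ℂ) * z 3)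
    have h2 := norm_add_le ((k 0 : ℂ) * z 1) ((k 1 : ℂ) * z 2)
    linarith
  have h0 := norm_add_le (-Complex.I * c * z 0)
    (Complex.I * ((k 0 : ℂ) * z 1 + (k 1 : ℂ) * z 2 + (k 2 : ℂ) * z 3))
  rw [t5] at h0
  nlinarith [norm_nonneg z, norm_nonneg k, norm_nonneg c]

lemma re_exponent (c : ℂ) (z : Fin 4 → ℂ) (k : EuclideanSpace ℝ (Fin 3)) :
    (-Complex.I * c * z 0 +
        Complex.I * ((k 0 : ℂ) * z 1 + (k 1 : ℂ) * z 2 + (k 2 : ℂ) * z 3)).re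
      = c.re * (z 0).im + c.im * (z 0).re
        - (k 0 * (z 1).im + k 1 * (z 2).im + k 2 * (z 3).im) := by
  simp [Complex.add_re, Complex.mul_re, Complex.mul_im, Complex.add_im]
  ring

lemma re_exponent_le (z : Fin 4 → ℂ) (k : EuclideanSpace ℝ (Fin 3)) (c : ℂ)
    {ε ηmax ρ M B : ℝ} (hε : 0 ≤ ε)
    (h1 : ε ≤ -(z 0).im - Real.sqrt ((z 1).im ^ 2 + (z 2).im ^ 2 + (z 3).im ^ 2))
    (h2 : -(z 0).im ≤ ηmax) (h3 : |(z 0).re| ≤ ρ) (hM : 0 ≤ M) (hB : 0 ≤ B)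
    (hc1 : ‖k‖ - M ≤ c.re) (hc2 : |c.im| ≤ B) :
    (-Complex.I * c * z 0 +
        Complex.I * ((k 0 : ℂ) * z 1 + (k 1 : ℂ) * z 2 + (k 2 : ℂ) * z 3)).re
      ≤ ηmax * M + B * ρ - ε * ‖k‖ := by
  rw [re_exponent]
  set η := -(z 0).im with hη
  set r := Real.sqrt ((z 1).im ^ 2 + (z 2).im ^ 2 + (z 3).im ^ 2) with hr
  have hr0 : 0 ≤ r := Real.sqrt_nonneg _
  have hη0 : 0 ≤ η := by linarith
  have hk0 : 0 ≤ ‖k‖ := norm_nonneg k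
  have hz0im : (z 0).im = -η := by rw [hη]; ring
  have hS : -(k 0 * (z 1).im + k 1 * (z 2).im + k 2 * (z 3).im) ≤ ‖k‖ * r := by
    have := cs_bound k ((z 1).im) ((z 2).im) ((z 3).im)
    rw [abs_le] at this
    linarith [this.1]
  have hA : c.re * (z 0).im ≤ -(η * ‖k‖) + η * M := by
    rw [hz0im]
    nlinarith [mul_le_mul_of_nonneg_left hc1 hη0]
  have hBc : c.im * (z 0).re ≤ B * ρ := by
    calc c.im * (z 0).re ≤ |c.im * (z 0).re| := le_abs_self _
      _ = |c.im| * |(z 0).re| := abs_mul _ _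
      _ ≤ B * ρ := mul_le_mul hc2 h3 (abs_nonneg _) hB
  have hMM : η * M ≤ ηmax * M := mul_le_mul_of_nonneg_right h2 hM
  have hprod : ε * ‖k‖ ≤ η * ‖k‖ - ‖k‖ * r := by nlinarith
  linarith


lemma norm_cpTerm_le (hζ : 0 < ζ.im) (Zc : ℂ) (z : Fin 4 → ℂ) (k : EuclideanSpace ℝ (Fin 3))
    {ε ηmax ρ : ℝ} (hε : 0 ≤ ε)
    (h1 : ε ≤ -(z 0).im - Real.sqrt ((z 1).im ^ 2 + (z 2).im ^ 2 + (z 3).im ^ 2))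
    (h2 : -(z 0).im ≤ ηmax) (h3 : |(z 0).re| ≤ ρ)
    (c : ℂ) (hc : c = Esqrt ζ k ∨ c = starRingEnd ℂ (Esqrt ζ k)) :
    ‖cpTerm Zc c z k‖ ≤
      ‖Zc‖ * (2 * Real.sqrt ζ.im)⁻¹ *
        Real.exp (ηmax * Real.sqrt (‖ζ‖) + Real.sqrt (2 * ‖ζ‖) * ρ) *
        Real.exp (-ε * ‖k‖) := by
  have him_pos := (esqrt_pos hζ k).2
  have hcre : ‖k‖ - Real.sqrt (‖ζ‖) ≤ c.re := by
    rcases hc with h | h <;> rw [h]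
    · exact esqrt_re_ge hζ k
    · simpa using esqrt_re_ge hζ k
  have hcim : |c.im| ≤ Real.sqrt (2 * ‖ζ‖) := by
    rcases hc with h | h <;> rw [h]
    · rw [abs_of_pos him_pos]
      exact esqrt_im_le hζ k
    · rw [show (starRingEnd ℂ (Esqrt ζ k)).im = -(Esqrt ζ k).im from by simp, abs_neg,
        abs_of_pos him_pos]
      exact esqrt_im_le hζ k
  have hcabs : Real.sqrt ζ.im ≤ ‖c‖ := by
    rcases hc with h | h <;> rw [h]
    · exact sqrt_im_le_abs_esqrt hζ k
    · rw [Complex.norm_conj]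
      exact sqrt_im_le_abs_esqrt hζ k
  have hsqim : 0 < Real.sqrt ζ.im := Real.sqrt_pos.mpr hζ
  have hre_le := re_exponent_le z k c hε h1 h2 h3 (Real.sqrt_nonneg _) (Real.sqrt_nonneg _)
    hcre hcim
  have hnorm : ‖cpTerm Zc c z k‖ = ‖Zc‖ * (2 * ‖c‖)⁻¹ *
      Real.exp ((-Complex.I * c * z 0 +
        Complex.I * ((k 0 : ℂ) * z 1 + (k 1 : ℂ) * z 2 + (k 2 : ℂ) * z 3)).re) := by
    rw [cpTerm, norm_mul, norm_mul, norm_inv,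
      Complex.norm_exp, norm_mul]
    norm_num
  rw [hnorm]
  have hinv : (2 * ‖c‖)⁻¹ ≤ (2 * Real.sqrt ζ.im)⁻¹ := by
    apply inv_anti₀ (by positivity)
    linarith
  have hexp : Real.exp ((-Complex.I * c * z 0 +
      Complex.I * ((k 0 : ℂ) * z 1 + (k 1 : ℂ) * z 2 + (k 2 : ℂ) * z 3)).re)
      ≤ Real.exp (ηmax * Real.sqrt (‖ζ‖) + Real.sqrt (2 * ‖ζ‖) * ρ) *
        Real.exp (-ε * ‖k‖) := by
    rw [← Real.exp_add]
    apply Real.exp_le_exp.mpr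
    linarith
  calc ‖Zc‖ * (2 * ‖c‖)⁻¹ * Real.exp _
      ≤ ‖Zc‖ * (2 * Real.sqrt ζ.im)⁻¹ *
        (Real.exp (ηmax * Real.sqrt (‖ζ‖) + Real.sqrt (2 * ‖ζ‖) * ρ) *
          Real.exp (-ε * ‖k‖)) := by
        apply mul_le_mul
        · exact mul_le_mul_of_nonneg_left hinv (norm_nonneg _)
        · exact hexp
        · positivity
        · positivity
      _ = ‖Zc‖ * (2 * Real.sqrt ζ.im)⁻¹ *
        Real.exp (ηmax * Real.sqrt (‖ζ‖) + Real.sqrt (2 * ‖ζ‖) * ρ) *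
        Real.exp (-ε * ‖k‖) := by ring

lemma hasFDerivAt_cpTerm (Zc c : ℂ) (k : EuclideanSpace ℝ (Fin 3)) (x : Fin 4 → ℂ) :
    HasFDerivAt (fun z => cpTerm Zc c z k) ((cpTerm Zc c x k) • expLin c k) x := by
  have heq : (fun z : Fin 4 → ℂ => cpTerm Zc c z k)
      = fun z => Zc * (2 * c)⁻¹ * Complex.exp (expLin c k z) := by
    funext z
    rw [cpTerm, expLin_apply]
  rw [heq]
  have h0 : HasFDerivAt (fun z : Fin 4 → ℂ => expLin c k z) (expLin c k) x :=
    (expLin c k).hasFDerivAt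
  have h1 := (h0.cexp).const_mul (Zc * (2 * c)⁻¹)
  have h2 : (Zc * (2 * c)⁻¹) • (Complex.exp (expLin c k x) • expLin c k)
      = (cpTerm Zc c x k) • expLin c k := by
    rw [smul_smul, cpTerm, expLin_apply]
  rw [← h2]
  exact h1

lemma continuous_esqrt (hζ : 0 < ζ.im) : Continuous (fun k : EuclideanSpace ℝ (Fin 3) => Esqrt ζ k) := by
  rw [continuous_iff_continuousAt]
  intro k
  have hbase : Continuous (fun k : EuclideanSpace ℝ (Fin 3) => ((‖k‖ ^ 2 : ℝ) : ℂ) + ζ) :=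
    (Complex.continuous_ofReal.comp (continuous_norm.pow 2)).add continuous_const
  have hmem : ((‖k‖ ^ 2 : ℝ) : ℂ) + ζ ∈ Complex.slitPlane := by
    apply Complex.mem_slitPlane_iff.mpr
    right
    simp [← Complex.ofReal_pow]
    exact hζ.ne'
  show ContinuousAt (fun k : EuclideanSpace ℝ (Fin 3) => (((‖k‖ ^ 2 : ℝ) : ℂ) + ζ) ^ ((1 : ℂ) / 2)) k
  exact ContinuousAt.comp (g := fun w : ℂ => w ^ ((1 : ℂ) / 2))
    (f := fun k : EuclideanSpace ℝ (Fin 3) => ((‖k‖ ^ 2 : ℝ) : ℂ) + ζ)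
    (continuousAt_cpow_const hmem) hbase.continuousAt

lemma continuous_coord (i : Fin 3) : Continuous (fun k : EuclideanSpace ℝ (Fin 3) => k i) :=
  (EuclideanSpace.proj (𝕜 := ℝ) i).continuous

lemma continuous_cpTerm (hζ : 0 < ζ.im) (Zc : ℂ) (z : Fin 4 → ℂ)
    {c : EuclideanSpace ℝ (Fin 3) → ℂ} (hc : Continuous c)
    (hc0 : ∀ k, c k ≠ 0) :
    Continuous (fun k => cpTerm Zc (c k) z k) := by
  unfold cpTerm
  apply Continuous.mul
  · apply Continuous.mul continuous_const
    exact ((continuous_const.mul hc).inv₀ fun k => mul_ne_zero two_ne_zero (hc0 k))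
  · apply Complex.continuous_exp.comp
    apply Continuous.add
    · exact (continuous_const.mul hc).mul continuous_const
    · apply Continuous.mul continuous_const
      apply Continuous.add
      apply Continuous.add
      · exact (Complex.continuous_ofReal.comp (continuous_coord 0)).mul continuous_const
      · exact (Complex.continuous_ofReal.comp (continuous_coord 1)).mul continuous_const
      · exact (Complex.continuous_ofReal.comp (continuous_coord 2)).mul continuous_const

lemma continuous_expLin {c : EuclideanSpace ℝ (Fin 3) → ℂ} (hc : Continuous c) :
    Continuous (fun k => expLin (c k) k) := by
  unfold expLin
  apply Continuous.add
  apply Continuous.add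
  apply Continuous.add
  · exact (continuous_const.mul hc).smul continuous_const
  · exact (continuous_const.mul (Complex.continuous_ofReal.comp (continuous_coord 0))).smul
      continuous_const
  · exact (continuous_const.mul (Complex.continuous_ofReal.comp (continuous_coord 1))).smul
      continuous_const
  · exact (continuous_const.mul (Complex.continuous_ofReal.comp (continuous_coord 2))).smul
      continuous_const

lemma integrable_decay {ε : ℝ} (hε : 0 < ε) :
    Integrable (fun k : EuclideanSpace ℝ (Fin 3) => (1 + ‖k‖) * Real.exp (-ε * ‖k‖)) := by
  set Mc := max 1 (6 / ε) with hMc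
  have hMc1 : (1 : ℝ) ≤ Mc := le_max_left _ _
  have hMc2 : 6 / ε ≤ Mc := le_max_right _ _
  have hMc0 : 0 < Mc := lt_of_lt_of_le one_pos hMc1
  have hkey : ∀ t : ℝ, 0 ≤ t → (1 + t) * Real.exp (-ε * t) ≤ Mc ^ 5 * ((1 + t) ^ 4)⁻¹ := by
    intro t ht
    have h1t : (0 : ℝ) < 1 + t := by linarith
    have hup : 1 + t ≤ Mc * Real.exp (ε / 6 * t) := by
      have e1 : 1 + ε / 6 * t ≤ Real.exp (ε / 6 * t) := Real.add_one_le_exp _ |>.trans_eq' (by ring)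
      have e2 : 1 + t ≤ Mc * (1 + ε / 6 * t) := by
        have : 6 / ε * ε = 6 := div_mul_cancel₀ 6 hε.ne'
        nlinarith [mul_le_mul_of_nonneg_right hMc2 (mul_nonneg (le_of_lt hε) ht)]
      calc 1 + t ≤ Mc * (1 + ε / 6 * t) := e2
        _ ≤ Mc * Real.exp (ε / 6 * t) := by
            exact mul_le_mul_of_nonneg_left e1 hMc0.le
    have hpow : (1 + t) ^ 5 ≤ Mc ^ 5 * Real.exp (ε / 6 * t) ^ 5 := by
      calc (1 + t) ^ 5 ≤ (Mc * Real.exp (ε / 6 * t)) ^ 5 :=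
            pow_le_pow_left₀ h1t.le hup 5
        _ = Mc ^ 5 * Real.exp (ε / 6 * t) ^ 5 := mul_pow _ _ 5
    have hexp5 : Real.exp (ε / 6 * t) ^ 5 = Real.exp (5 * (ε / 6) * t) := by
      rw [← Real.exp_nat_mul]
      ring_nf
    have h5 : (1 + t) ^ 5 * Real.exp (-ε * t) ≤ Mc ^ 5 := by
      have : Real.exp (5 * (ε / 6) * t) * Real.exp (-ε * t) = Real.exp (-(ε / 6) * t) := by
        rw [← Real.exp_add]
        ring_nf
      have hle1 : Real.exp (-(ε / 6) * t) ≤ 1 := by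
        apply Real.exp_le_one_iff.mpr
        nlinarith
      calc (1 + t) ^ 5 * Real.exp (-ε * t)
          ≤ Mc ^ 5 * Real.exp (5 * (ε / 6) * t) * Real.exp (-ε * t) := by
            apply mul_le_mul_of_nonneg_right _ (Real.exp_nonneg _)
            rw [← hexp5]; exact hpow
        _ = Mc ^ 5 * Real.exp (-(ε / 6) * t) := by rw [mul_assoc, this]
        _ ≤ Mc ^ 5 := by nlinarith [pow_pos hMc0 5]
    rw [← div_eq_mul_inv, le_div_iff₀ (by positivity : (0:ℝ) < (1 + t) ^ 4)]
    have heq : (1 + t) * Real.exp (-ε * t) * (1 + t) ^ 4 = (1 + t) ^ 5 * Real.exp (-ε * t) := by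
      ring
    rw [heq]
    exact h5
  have hint : Integrable (fun k : EuclideanSpace ℝ (Fin 3) => Mc ^ 5 * (1 + ‖k‖) ^ (-(4:ℝ))) :=
    (integrable_one_add_norm (E := EuclideanSpace ℝ (Fin 3)) (by
      rw [finrank_euclideanSpace]
      norm_num)).const_mul _
  apply hint.mono'
  · apply Continuous.aestronglyMeasurable
    exact (continuous_const.add continuous_norm).mul
      ((continuous_const.mul continuous_norm).rexp)
  · filter_upwards with k
    have hn : 0 ≤ ‖k‖ := norm_nonneg k
    have h := hkey ‖k‖ hn
    have hr : (1 + ‖k‖) ^ (-(4:ℝ)) = ((1 + ‖k‖) ^ (4:ℕ))⁻¹ := by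
      rw [Real.rpow_neg (by positivity), ← Real.rpow_natCast (1 + ‖k‖) 4]
      norm_num
    rw [Real.norm_eq_abs, _root_.abs_of_nonneg (by positivity), hr]
    simpa using h

lemma continuous_esqrt_conj (hζ : 0 < ζ.im) :
    Continuous (fun k : EuclideanSpace ℝ (Fin 3) => starRingEnd ℂ (Esqrt ζ k)) :=
  continuous_star.comp (continuous_esqrt hζ)

lemma esqrt_conj_ne_zero (hζ : 0 < ζ.im) (k : EuclideanSpace ℝ (Fin 3)) :
    starRingEnd ℂ (Esqrt ζ k) ≠ 0 := by
  simpa using esqrt_ne_zero hζ k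

lemma abs_esqrt_conj_le (hζ : 0 < ζ.im) (k : EuclideanSpace ℝ (Fin 3)) :
    ‖starRingEnd ℂ (Esqrt ζ k)‖ ≤ ‖k‖ + Real.sqrt (‖ζ‖) := by
  rw [Complex.norm_conj]
  exact abs_esqrt_le hζ k

end CPAux

open CPAux

/-- Theorem 3 of the paper: for `Im ζ > 0` and `Z ∈ ℂ`, the integrand of
the reconstructed Wightman function of the pair of complex-conjugate poles
`Z/(k² + ζ) + Z*/(k² + ζ*)` is integrable over `ℝ³` for every `z` in the forward tube, and
the resulting function is holomorphic (ℂ-differentiable) at every point of the tube. -/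
theorem cpWightman_holomorphic_on_tube (ζ : ℂ) (hζ : 0 < ζ.im) (Z : ℂ) :
    (∀ z ∈ ForwardTube, Integrable (cpIntegrand ζ Z z)) ∧
    (∀ z ∈ ForwardTube, DifferentiableAt ℂ (cpWightman ζ Z) z) := by
  have hM0 : (0 : ℝ) ≤ Real.sqrt (‖ζ‖) := Real.sqrt_nonneg _
  have hB0 : (0 : ℝ) ≤ Real.sqrt (2 * ‖ζ‖) := Real.sqrt_nonneg _
  have hmeas : ∀ z : Fin 4 → ℂ, AEStronglyMeasurable (cpIntegrand ζ Z z) volume := by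
    intro z
    apply Continuous.aestronglyMeasurable
    have h1 := continuous_cpTerm (hζ := hζ) Z z (continuous_esqrt hζ) (esqrt_ne_zero hζ)
    have h2 := continuous_cpTerm (hζ := hζ) (starRingEnd ℂ Z) z (continuous_esqrt_conj hζ)
      (esqrt_conj_ne_zero hζ)
    exact h1.add h2
  have hInt : ∀ z ∈ ForwardTube, Integrable (cpIntegrand ζ Z z) := by
    intro z hz
    rw [ForwardTube, Set.mem_setOf_eq] at hz
    have hε0 : 0 < -(z 0).im - Real.sqrt ((z 1).im ^ 2 + (z 2).im ^ 2 + (z 3).im ^ 2) := by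
      linarith
    set ε := -(z 0).im - Real.sqrt ((z 1).im ^ 2 + (z 2).im ^ 2 + (z 3).im ^ 2) with hεdef
    set D := ‖Z‖ * (2 * Real.sqrt ζ.im)⁻¹ *
      Real.exp ((-(z 0).im) * Real.sqrt (‖ζ‖) +
        Real.sqrt (2 * ‖ζ‖) * |(z 0).re|) with hDdef
    have hD0 : 0 ≤ D := by positivity
    apply Integrable.mono' ((integrable_decay hε0).const_mul (2 * D))
    · exact hmeas z
    · filter_upwards with k
      have hb1 := norm_cpTerm_le hζ Z z k hε0.le le_rfl le_rfl le_rfl (Esqrt ζ k) (Or.inl rfl)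
      have hb2 := norm_cpTerm_le hζ (starRingEnd ℂ Z) z k hε0.le le_rfl le_rfl le_rfl
        (starRingEnd ℂ (Esqrt ζ k)) (Or.inr rfl)
      rw [Complex.norm_conj] at hb2
      rw [cpIntegrand_eq]
      have htri := norm_add_le (cpTerm Z (Esqrt ζ k) z k)
        (cpTerm (starRingEnd ℂ Z) (starRingEnd ℂ (Esqrt ζ k)) z k)
      have hexp0 : 0 ≤ Real.exp (-ε * ‖k‖) := Real.exp_nonneg _
      have hx : 1 ≤ 1 + ‖k‖ := by linarith [norm_nonneg k]
      nlinarith [mul_le_mul_of_nonneg_left hx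
        (mul_nonneg (mul_nonneg (by norm_num : (0:ℝ) ≤ 2) hD0) hexp0)]
  refine ⟨hInt, ?_⟩
  intro x₀ hx₀
  have hx₀' := hx₀
  rw [ForwardTube, Set.mem_setOf_eq] at hx₀
  set η₀ := -(x₀ 0).im with hη₀
  set r₀ := Real.sqrt ((x₀ 1).im ^ 2 + (x₀ 2).im ^ 2 + (x₀ 3).im ^ 2) with hr₀
  have hr₀0 : 0 ≤ r₀ := Real.sqrt_nonneg _
  set δ := (η₀ - r₀) / 8 with hδdef
  have hδ : 0 < δ := by rw [hδdef]; linarith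
  set εb := (η₀ - r₀) / 2 with hεbdef
  have hεb : 0 < εb := by rw [hεbdef]; linarith
  set M := Real.sqrt (‖ζ‖) with hMdef
  set B := Real.sqrt (2 * ‖ζ‖) with hBdef
  set ηmax := η₀ + δ with hηmaxdef
  set ρ := |(x₀ 0).re| + δ with hρdef
  set D := ‖Z‖ * (2 * Real.sqrt ζ.im)⁻¹ * Real.exp (ηmax * M + B * ρ) with hDdef
  have hD0 : 0 ≤ D := by positivity
  set K := 2 * D * (M + 4) with hKdef
  have hball : ∀ x ∈ Metric.ball x₀ δ,
      (εb ≤ -(x 0).im - Real.sqrt ((x 1).im ^ 2 + (x 2).im ^ 2 + (x 3).im ^ 2))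
      ∧ -(x 0).im ≤ ηmax ∧ |(x 0).re| ≤ ρ := by
    intro x hx
    have hdist : ‖x - x₀‖ ≤ δ := by
      rw [Metric.mem_ball, dist_eq_norm] at hx
      exact hx.le
    have hcoord : ∀ i : Fin 4, ‖x i - x₀ i‖ ≤ δ := fun i => by
      have h1 : ‖(x - x₀) i‖ ≤ ‖x - x₀‖ := norm_le_pi_norm (x - x₀) i
      have h2 : (x - x₀) i = x i - x₀ i := rfl
      rw [h2] at h1
      linarith
    have him : ∀ i : Fin 4, |(x i).im - (x₀ i).im| ≤ δ := fun i => by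
      calc |(x i).im - (x₀ i).im| = |(x i - x₀ i).im| := by rw [Complex.sub_im]
        _ ≤ ‖x i - x₀ i‖ := Complex.abs_im_le_norm _
        _ ≤ δ := hcoord i
    have hre0 : |(x 0).re - (x₀ 0).re| ≤ δ := by
      calc |(x 0).re - (x₀ 0).re| = |(x 0 - x₀ 0).re| := by rw [Complex.sub_re]
        _ ≤ ‖x 0 - x₀ 0‖ := Complex.abs_re_le_norm _
        _ ≤ δ := hcoord 0
    have h0a := (abs_le.mp (him 0)).1
    have h0b := (abs_le.mp (him 0)).2
    have htr := sqrt_triangle hδ.le (him 1) (him 2) (him 3)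
    refine ⟨?_, ?_, ?_⟩
    · rw [hεbdef]
      rw [← hr₀] at htr
      linarith
    · rw [hηmaxdef, hη₀]
      linarith
    · rw [hρdef]
      have := abs_sub_abs_le_abs_sub ((x 0).re) ((x₀ 0).re)
      linarith
  have hint0 : Integrable (cpIntegrand ζ Z x₀) volume := hInt x₀ hx₀'
  have hmeas' : AEStronglyMeasurable (fun k : EuclideanSpace ℝ (Fin 3) =>
      (cpTerm Z (Esqrt ζ k) x₀ k) • expLin (Esqrt ζ k) k +
      (cpTerm (starRingEnd ℂ Z) (starRingEnd ℂ (Esqrt ζ k)) x₀ k) •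
        expLin (starRingEnd ℂ (Esqrt ζ k)) k) volume := by
    apply Continuous.aestronglyMeasurable
    apply Continuous.add
    · exact (continuous_cpTerm (hζ := hζ) Z x₀ (continuous_esqrt hζ) (esqrt_ne_zero hζ)).smul
        (continuous_expLin (continuous_esqrt hζ))
    · exact (continuous_cpTerm (hζ := hζ) (starRingEnd ℂ Z) x₀ (continuous_esqrt_conj hζ)
        (esqrt_conj_ne_zero hζ)).smul (continuous_expLin (continuous_esqrt_conj hζ))
  have h_bound : ∀ᵐ k : EuclideanSpace ℝ (Fin 3), ∀ x ∈ Metric.ball x₀ δ,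
      ‖(cpTerm Z (Esqrt ζ k) x k) • expLin (Esqrt ζ k) k +
        (cpTerm (starRingEnd ℂ Z) (starRingEnd ℂ (Esqrt ζ k)) x k) •
          expLin (starRingEnd ℂ (Esqrt ζ k)) k‖
        ≤ K * ((1 + ‖k‖) * Real.exp (-εb * ‖k‖)) := by
    filter_upwards with k
    intro x hx
    obtain ⟨hb1, hb2, hb3⟩ := hball x hx
    have t1 := norm_cpTerm_le hζ Z x k hεb.le hb1 hb2 hb3 (Esqrt ζ k) (Or.inl rfl)
    have t2 := norm_cpTerm_le hζ (starRingEnd ℂ Z) x k hεb.le hb1 hb2 hb3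
      (starRingEnd ℂ (Esqrt ζ k)) (Or.inr rfl)
    rw [Complex.norm_conj] at t2
    have l1 : ‖expLin (Esqrt ζ k) k‖ ≤ M + 4 * ‖k‖ := by
      have h1 := norm_expLin_le (Esqrt ζ k) k
      have h2 := abs_esqrt_le hζ k
      linarith
    have l2 : ‖expLin (starRingEnd ℂ (Esqrt ζ k)) k‖ ≤ M + 4 * ‖k‖ := by
      have h1 := norm_expLin_le (starRingEnd ℂ (Esqrt ζ k)) k
      have h2 := abs_esqrt_conj_le hζ k
      linarith
    have htri := norm_add_le ((cpTerm Z (Esqrt ζ k) x k) • expLin (Esqrt ζ k) k)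
      ((cpTerm (starRingEnd ℂ Z) (starRingEnd ℂ (Esqrt ζ k)) x k) •
        expLin (starRingEnd ℂ (Esqrt ζ k)) k)
    have e1 : ‖(cpTerm Z (Esqrt ζ k) x k) • expLin (Esqrt ζ k) k‖
        ≤ ‖cpTerm Z (Esqrt ζ k) x k‖ * ‖expLin (Esqrt ζ k) k‖ :=
      ContinuousLinearMap.opNorm_smul_le _ _
    have e2 : ‖(cpTerm (starRingEnd ℂ Z) (starRingEnd ℂ (Esqrt ζ k)) x k) •
          expLin (starRingEnd ℂ (Esqrt ζ k)) k‖
        ≤ ‖cpTerm (starRingEnd ℂ Z) (starRingEnd ℂ (Esqrt ζ k)) x k‖ *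
          ‖expLin (starRingEnd ℂ (Esqrt ζ k)) k‖ :=
      ContinuousLinearMap.opNorm_smul_le _ _
    have hexp0 : (0 : ℝ) ≤ Real.exp (-εb * ‖k‖) := Real.exp_nonneg _
    have hk0 : (0 : ℝ) ≤ ‖k‖ := norm_nonneg k
    have hDexp : (0 : ℝ) ≤ D * Real.exp (-εb * ‖k‖) := by positivity
    have hL0 : (0 : ℝ) ≤ M + 4 * ‖k‖ := by linarith
    have s1 : ‖cpTerm Z (Esqrt ζ k) x k‖ * ‖expLin (Esqrt ζ k) k‖
        ≤ (D * Real.exp (-εb * ‖k‖)) * (M + 4 * ‖k‖) := by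
      apply mul_le_mul _ l1 (norm_nonneg _) hDexp
      calc ‖cpTerm Z (Esqrt ζ k) x k‖
          ≤ ‖Z‖ * (2 * Real.sqrt ζ.im)⁻¹ * Real.exp (ηmax * M + B * ρ) *
            Real.exp (-εb * ‖k‖) := t1
        _ = D * Real.exp (-εb * ‖k‖) := by rw [hDdef]
    have s2 : ‖cpTerm (starRingEnd ℂ Z) (starRingEnd ℂ (Esqrt ζ k)) x k‖ *
        ‖expLin (starRingEnd ℂ (Esqrt ζ k)) k‖
        ≤ (D * Real.exp (-εb * ‖k‖)) * (M + 4 * ‖k‖) := by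
      apply mul_le_mul _ l2 (norm_nonneg _) hDexp
      calc ‖cpTerm (starRingEnd ℂ Z) (starRingEnd ℂ (Esqrt ζ k)) x k‖
          ≤ ‖Z‖ * (2 * Real.sqrt ζ.im)⁻¹ * Real.exp (ηmax * M + B * ρ) *
            Real.exp (-εb * ‖k‖) := t2
        _ = D * Real.exp (-εb * ‖k‖) := by rw [hDdef]
    have s3 : M + 4 * ‖k‖ ≤ (M + 4) * (1 + ‖k‖) := by nlinarith
    have s4 : (D * Real.exp (-εb * ‖k‖)) * (M + 4 * ‖k‖)
        ≤ (D * Real.exp (-εb * ‖k‖)) * ((M + 4) * (1 + ‖k‖)) :=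
      mul_le_mul_of_nonneg_left s3 hDexp
    have s5 : K * ((1 + ‖k‖) * Real.exp (-εb * ‖k‖))
        = 2 * ((D * Real.exp (-εb * ‖k‖)) * ((M + 4) * (1 + ‖k‖))) := by
      rw [hKdef]; ring
    linarith
  have h_diff : ∀ᵐ k : EuclideanSpace ℝ (Fin 3), ∀ x ∈ Metric.ball x₀ δ,
      HasFDerivAt (fun x => cpIntegrand ζ Z x k)
        ((cpTerm Z (Esqrt ζ k) x k) • expLin (Esqrt ζ k) k +
          (cpTerm (starRingEnd ℂ Z) (starRingEnd ℂ (Esqrt ζ k)) x k) •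
            expLin (starRingEnd ℂ (Esqrt ζ k)) k) x := by
    filter_upwards with k
    intro x _
    exact (hasFDerivAt_cpTerm Z (Esqrt ζ k) k x).add
      (hasFDerivAt_cpTerm (starRingEnd ℂ Z) (starRingEnd ℂ (Esqrt ζ k)) k x)
  have key := hasFDerivAt_integral_of_dominated_of_fderiv_le (𝕜 := ℂ) (μ := volume)
    (F := fun x k => cpIntegrand ζ Z x k)
    (F' := fun x (k : EuclideanSpace ℝ (Fin 3)) =>
      (cpTerm Z (Esqrt ζ k) x k) • expLin (Esqrt ζ k) k +
      (cpTerm (starRingEnd ℂ Z) (starRingEnd ℂ (Esqrt ζ k)) x k) •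
        expLin (starRingEnd ℂ (Esqrt ζ k)) k)
    (bound := fun k => K * ((1 + ‖k‖) * Real.exp (-εb * ‖k‖)))
    (Metric.ball_mem_nhds x₀ hδ) (Filter.Eventually.of_forall fun x => hmeas x) hint0 hmeas' h_bound
    ((integrable_decay hεb).const_mul K) h_diff
  have hdiff : DifferentiableAt ℂ (fun x : Fin 4 → ℂ => ∫ k, cpIntegrand ζ Z x k) x₀ :=
    key.differentiableAt
  exact hdiff.const_mul _
end
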